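/- arXiv:1906.02781 — 4 statements merged into one kernel-verified Lean document; each statement's English description precedes it below -/
import Mathlib

section
/- For a matroid M on a totally ordered ground set E, the Boolean lattice of subsets of E decomposes as the disjoint union, over all bases B of M, of the intervals [B∖I(B), B∪L(B)], where I(B) and L(B) are the sets of internally and externally active elements of B respectively. That is, every subset S⊆E lies in exactly one such interval. -/
noncomputable section
attribute [local instance] Classical.propDecidable

namespace TutteActivities

variable {α : Type*} [DecidableEq α]

/-- `ℬ` is the family of bases of a matroid on ground set `E`:
nonempty, contained in `E`, and satisfying the basis-exchange axiom. -/
def IsMatroidOn (E : Finset α) (ℬ : Finset (Finset α)) : Prop :=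
  ℬ.Nonempty ∧ (∀ B ∈ ℬ, B ⊆ E) ∧
    ∀ B₁ ∈ ℬ, ∀ B₂ ∈ ℬ, ∀ e ∈ B₁ \ B₂, ∃ f ∈ B₂ \ B₁, insert f (B₁.erase e) ∈ ℬ

/-- A set is independent if it is contained in a basis. -/
def Indep (ℬ : Finset (Finset α)) (S : Finset α) : Prop := ∃ B ∈ ℬ, S ⊆ B

/-- A circuit is a minimal dependent subset of the ground set. -/
def Circuit (E : Finset α) (ℬ : Finset (Finset α)) (C : Finset α) : Prop :=
  C ⊆ E ∧ ¬ Indep ℬ C ∧ ∀ D ⊂ C, Indep ℬ D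

/-- A cocircuit is a minimal subset of the ground set meeting every basis. -/
def Cocircuit (E : Finset α) (ℬ : Finset (Finset α)) (C : Finset α) : Prop :=
  C ⊆ E ∧ (∀ B ∈ ℬ, (B ∩ C).Nonempty) ∧ ∀ D ⊂ C, ∃ B ∈ ℬ, B ∩ D = ∅

/-- The rank of a set `A`: the largest size of the intersection of a basis with `A`. -/
def rank (ℬ : Finset (Finset α)) (A : Finset α) : ℕ := ℬ.sup fun B => (B ∩ A).card

/-- `e` is the minimum element of `C` with respect to the order given by labels `σ`. -/
def IsMinOf (σ : α → ℕ) (e : α) (C : Finset α) : Prop := e ∈ C ∧ ∀ g ∈ C, σ e ≤ σ g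

/-- `f ∉ B` is externally active: `f` is the minimum of the fundamental circuit of `f`,
i.e. of a circuit contained in `B ∪ {f}`. -/
def ExtActive (E : Finset α) (ℬ : Finset (Finset α)) (σ : α → ℕ) (B : Finset α) (f : α) :
    Prop :=
  f ∉ B ∧ ∃ C, Circuit E ℬ C ∧ C ⊆ insert f B ∧ IsMinOf σ f C

/-- `e ∈ B` is internally active: `e` is the minimum of the fundamental cocircuit of `e`,
i.e. of a cocircuit contained in `(E \ B) ∪ {e}`. -/
def IntActive (E : Finset α) (ℬ : Finset (Finset α)) (σ : α → ℕ) (B : Finset α) (e : α) :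
    Prop :=
  e ∈ B ∧ ∃ C, Cocircuit E ℬ C ∧ C ⊆ insert e (E \ B) ∧ IsMinOf σ e C

/-- The set of externally active elements of a basis `B`. -/
def extSet (E : Finset α) (ℬ : Finset (Finset α)) (σ : α → ℕ) (B : Finset α) : Finset α :=
  E.filter (ExtActive E ℬ σ B)

/-- The set of internally active elements of a basis `B`. -/
def intSet (E : Finset α) (ℬ : Finset (Finset α)) (σ : α → ℕ) (B : Finset α) : Finset α :=
  E.filter (IntActive E ℬ σ B)

/-- The Tutte polynomial via Whitney's corank-nullity expansion. -/
def tutte (E : Finset α) (ℬ : Finset (Finset α)) (x y : ℤ) : ℤ :=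
  ∑ A ∈ E.powerset, (x - 1) ^ (rank ℬ E - rank ℬ A) * (y - 1) ^ (A.card - rank ℬ A)

/-! ### Auxiliary lemmas -/

variable {E : Finset α} {ℬ : Finset (Finset α)}

/-- All bases have the same cardinality. -/
theorem TA_basis_card_eq (hM : IsMatroidOn E ℬ) :
    ∀ B₁ ∈ ℬ, ∀ B₂ ∈ ℬ, B₁.card = B₂.card := by
  obtain ⟨-, -, hex⟩ := hM
  intro B₁ hB₁ B₂ hB₂
  suffices h : ∀ n, ∀ B₁ ∈ ℬ, (B₁ \ B₂).card = n → B₁.card = B₂.card from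
    h _ B₁ hB₁ rfl
  intro n
  induction n using Nat.strong_induction_on with
  | _ n ih =>
    intro B₁ hB₁ hn
    rcases Nat.eq_zero_or_pos n with h0 | hpos
    · subst h0
      have hsub : B₁ ⊆ B₂ := by
        rw [← Finset.sdiff_eq_empty_iff_subset]
        exact Finset.card_eq_zero.mp hn
      have hsub' : B₂ ⊆ B₁ := by
        intro x hx
        by_contra hx'
        obtain ⟨f, hf, -⟩ := hex B₂ hB₂ B₁ hB₁ x (Finset.mem_sdiff.mpr ⟨hx, hx'⟩)
        rw [Finset.mem_sdiff] at hf
        exact hf.2 (hsub hf.1)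
      rw [Finset.Subset.antisymm hsub hsub']
    · obtain ⟨e, he⟩ := Finset.card_pos.mp (hn ▸ hpos)
      obtain ⟨f, hf, hB₃⟩ := hex B₁ hB₁ B₂ hB₂ e he
      rw [Finset.mem_sdiff] at he hf
      have hcard : (insert f (B₁.erase e)).card = B₁.card := by
        rw [Finset.card_insert_of_notMem (fun h => hf.2 (Finset.mem_of_mem_erase h)),
          Finset.card_erase_of_mem he.1]
        have := Finset.card_pos.mpr ⟨e, he.1⟩
        omega
      have hsd : insert f (B₁.erase e) \ B₂ = (B₁ \ B₂).erase e := by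
        ext x
        simp only [Finset.mem_sdiff, Finset.mem_insert, Finset.mem_erase]
        constructor
        · rintro ⟨hx1 | ⟨hxe, hxB⟩, hx2⟩
          · exact absurd (hx1 ▸ hf.1) hx2
          · exact ⟨hxe, hxB, hx2⟩
        · rintro ⟨hxe, hxB, hx2⟩
          exact ⟨Or.inr ⟨hxe, hxB⟩, hx2⟩
      have hlt : ((insert f (B₁.erase e)) \ B₂).card < n := by
        rw [hsd, Finset.card_erase_of_mem (Finset.mem_sdiff.mpr he), hn]
        omega
      rw [← hcard]
      exact ih _ hlt _ hB₃ rfl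

/-- A proper subset of a basis (obtained by erasing an element) is not a basis. -/
theorem TA_erase_notMem (hM : IsMatroidOn E ℬ) {B : Finset α} (hB : B ∈ ℬ) {e : α}
    (he : e ∈ B) : B.erase e ∉ ℬ := by
  intro h
  have := TA_basis_card_eq hM _ h _ hB
  rw [Finset.card_erase_of_mem he] at this
  have := Finset.card_pos.mpr ⟨e, he⟩
  omega

/-- Any independent set extends to a basis inside `I ∪ B'` for any basis `B'`. -/
theorem TA_exists_basis_between (hM : IsMatroidOn E ℬ) {I B₀ B' : Finset α}
    (hB₀ : B₀ ∈ ℬ) (hI : I ⊆ B₀) (hB' : B' ∈ ℬ) :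
    ∃ B₁ ∈ ℬ, I ⊆ B₁ ∧ B₁ ⊆ I ∪ B' := by
  obtain ⟨-, -, hex⟩ := hM
  suffices h : ∀ n, ∀ B₀ ∈ ℬ, I ⊆ B₀ → (B₀ \ (I ∪ B')).card = n →
      ∃ B₁ ∈ ℬ, I ⊆ B₁ ∧ B₁ ⊆ I ∪ B' from h _ B₀ hB₀ hI rfl
  intro n
  induction n using Nat.strong_induction_on with
  | _ n ih =>
    intro B₀ hB₀ hI hn
    rcases Nat.eq_zero_or_pos n with h0 | hpos
    · subst h0
      refine ⟨B₀, hB₀, hI, ?_⟩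
      rw [← Finset.sdiff_eq_empty_iff_subset]
      exact Finset.card_eq_zero.mp hn
    · obtain ⟨e, he⟩ := Finset.card_pos.mp (hn ▸ hpos)
      rw [Finset.mem_sdiff, Finset.mem_union] at he
      push_neg at he
      obtain ⟨heB₀, heI, heB'⟩ := he
      obtain ⟨f, hf, hB₃⟩ := hex B₀ hB₀ B' hB' e (Finset.mem_sdiff.mpr ⟨heB₀, heB'⟩)
      rw [Finset.mem_sdiff] at hf
      have hIsub : I ⊆ insert f (B₀.erase e) := by
        intro x hx
        exact Finset.mem_insert_of_mem
          (Finset.mem_erase.mpr ⟨fun h => heI (h ▸ hx), hI hx⟩)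
      have hsub : insert f (B₀.erase e) \ (I ∪ B') ⊆ (B₀ \ (I ∪ B')).erase e := by
        intro x hx
        rw [Finset.mem_sdiff, Finset.mem_insert] at hx
        rcases hx.1 with h1 | h1
        · exact absurd (Finset.mem_union_right _ (h1 ▸ hf.1)) hx.2
        · rw [Finset.mem_erase] at h1
          exact Finset.mem_erase.mpr ⟨h1.1, Finset.mem_sdiff.mpr ⟨h1.2, hx.2⟩⟩
      have hlt : (insert f (B₀.erase e) \ (I ∪ B')).card < n := by
        calc (insert f (B₀.erase e) \ (I ∪ B')).card
            ≤ ((B₀ \ (I ∪ B')).erase e).card := Finset.card_le_card hsub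
          _ < n := by
              rw [Finset.card_erase_of_mem
                (Finset.mem_sdiff.mpr ⟨heB₀, by simp [heI, heB']⟩), hn]
              omega
      exact ih _ hlt _ hB₃ hIsub rfl

/-- The fundamental circuit of `f ∉ B` with respect to a basis `B`. -/
theorem TA_fundCircuit (hM : IsMatroidOn E ℬ) {B : Finset α} (hB : B ∈ ℬ) {f : α}
    (hfE : f ∈ E) (hfB : f ∉ B) :
    Circuit E ℬ (insert f (B.filter fun g => insert f (B.erase g) ∈ ℬ)) := by
  have hBE : B ⊆ E := hM.2.1 B hB
  set Cf : Finset α := insert f (B.filter fun g => insert f (B.erase g) ∈ ℬ) with hCf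
  have hCfsub : Cf ⊆ insert f B :=
    Finset.insert_subset_insert _ (Finset.filter_subset _ _)
  refine ⟨hCfsub.trans (Finset.insert_subset hfE hBE), ?_, ?_⟩
  · rintro ⟨B'', hB'', hsub⟩
    obtain ⟨B₁, hB₁, hCB₁, hB₁sub⟩ := TA_exists_basis_between hM hB'' hsub hB
    have hfB₁ : f ∈ B₁ := hCB₁ (Finset.mem_insert_self _ _)
    have hB₁f : B₁ ⊆ insert f B := hB₁sub.trans (Finset.union_subset hCfsub
      (Finset.subset_insert _ _))
    have hcardeq : B₁.card = B.card := TA_basis_card_eq hM _ hB₁ _ hB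
    obtain ⟨g, hgB, hgB₁⟩ : ∃ g, g ∈ B ∧ g ∉ B₁ := by
      by_contra h
      push_neg at h
      have hBB₁ : B ⊆ B₁ := h
      have : B = B₁ := Finset.eq_of_subset_of_card_le hBB₁ (le_of_eq hcardeq)
      exact hfB (this ▸ hfB₁)
    have hgf : g ≠ f := fun h => hfB (h ▸ hgB)
    have hsub2 : B₁ ⊆ insert f (B.erase g) := by
      intro x hx
      rcases Finset.mem_insert.mp (hB₁f hx) with h | h
      · exact h ▸ Finset.mem_insert_self _ _
      · exact Finset.mem_insert_of_mem
          (Finset.mem_erase.mpr ⟨fun he => hgB₁ (he ▸ hx), h⟩)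
    have hcard2 : (insert f (B.erase g)).card = B.card := by
      rw [Finset.card_insert_of_notMem (fun h => hfB (Finset.mem_of_mem_erase h)),
        Finset.card_erase_of_mem hgB]
      have := Finset.card_pos.mpr ⟨g, hgB⟩
      omega
    have heq : B₁ = insert f (B.erase g) :=
      Finset.eq_of_subset_of_card_le hsub2 (by rw [hcard2, hcardeq])
    have : g ∈ Cf := Finset.mem_insert_of_mem
      (Finset.mem_filter.mpr ⟨hgB, heq ▸ hB₁⟩)
    exact hgB₁ (hCB₁ this)
  · intro D hD
    obtain ⟨h, hhC, hhD⟩ := Finset.exists_of_ssubset hD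
    have hDsub : D ⊆ Cf.erase h := fun x hx =>
      Finset.mem_erase.mpr ⟨fun he => hhD (he ▸ hx), hD.subset hx⟩
    rcases Finset.mem_insert.mp hhC with hhf | hhfil
    · subst hhf
      have hfnotfil : h ∉ B.filter fun g => insert h (B.erase g) ∈ ℬ :=
        fun hh => hfB (Finset.mem_of_mem_filter _ hh)
      refine ⟨B, hB, ?_⟩
      intro x hx
      have := hDsub hx
      rw [hCf, Finset.erase_insert hfnotfil] at this
      exact Finset.mem_of_mem_filter _ this
    · rw [Finset.mem_filter] at hhfil
      refine ⟨insert f (B.erase h), hhfil.2, ?_⟩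
      intro x hx
      have hx' := hDsub hx
      rw [Finset.mem_erase] at hx'
      rcases Finset.mem_insert.mp hx'.2 with h1 | h1
      · exact h1 ▸ Finset.mem_insert_self _ _
      · exact Finset.mem_insert_of_mem
          (Finset.mem_erase.mpr ⟨hx'.1, Finset.mem_of_mem_filter _ h1⟩)

/-- The fundamental cocircuit of `e ∈ B` with respect to a basis `B`. -/
theorem TA_fundCocircuit (hM : IsMatroidOn E ℬ) {B : Finset α} (hB : B ∈ ℬ) {e : α}
    (he : e ∈ B) :
    Cocircuit E ℬ (E.filter fun g => insert g (B.erase e) ∈ ℬ) ∧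
      (E.filter fun g => insert g (B.erase e) ∈ ℬ) ⊆ insert e (E \ B) ∧
      e ∈ (E.filter fun g => insert g (B.erase e) ∈ ℬ) := by
  have hBE : B ⊆ E := hM.2.1 B hB
  set D : Finset α := E.filter fun g => insert g (B.erase e) ∈ ℬ with hDdef
  have hDsub : D ⊆ insert e (E \ B) := by
    intro g hg
    rw [hDdef, Finset.mem_filter] at hg
    rcases eq_or_ne g e with h | h
    · exact h ▸ Finset.mem_insert_self _ _
    · refine Finset.mem_insert_of_mem (Finset.mem_sdiff.mpr ⟨hg.1, fun hgB => ?_⟩)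
      have : insert g (B.erase e) = B.erase e :=
        Finset.insert_eq_self.mpr (Finset.mem_erase.mpr ⟨h, hgB⟩)
      exact TA_erase_notMem hM hB he (this ▸ hg.2)
  have heD : e ∈ D := by
    rw [hDdef, Finset.mem_filter]
    exact ⟨hBE he, by rw [Finset.insert_erase he]; exact hB⟩
  refine ⟨⟨Finset.filter_subset _ _, ?_, ?_⟩, hDsub, heD⟩
  · intro B' hB'
    by_cases heB' : e ∈ B'
    · exact ⟨e, Finset.mem_inter.mpr ⟨heB', heD⟩⟩
    · obtain ⟨f, hf, hBf⟩ := hM.2.2 B hB B' hB' e (Finset.mem_sdiff.mpr ⟨he, heB'⟩)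
      rw [Finset.mem_sdiff] at hf
      exact ⟨f, Finset.mem_inter.mpr ⟨hf.1, Finset.mem_filter.mpr
        ⟨hM.2.1 B' hB' hf.1, hBf⟩⟩⟩
  · intro D' hD'
    obtain ⟨h, hhD, hhD'⟩ := Finset.exists_of_ssubset hD'
    rw [hDdef, Finset.mem_filter] at hhD
    refine ⟨insert h (B.erase e), hhD.2, ?_⟩
    rw [Finset.eq_empty_iff_forall_notMem]
    intro x hx
    rw [Finset.mem_inter, Finset.mem_insert] at hx
    obtain ⟨hx1, hx2⟩ := hx
    have hxD : x ∈ D := hD'.subset hx2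
    have hxne : x ≠ h := fun hxh => hhD' (hxh ▸ hx2)
    rcases hx1 with h1 | h1
    · exact hxne h1
    · rw [Finset.mem_erase] at h1
      rcases Finset.mem_insert.mp (hDsub hxD) with h2 | h2
      · exact h1.1 h2
      · exact (Finset.mem_sdiff.mp h2).2 h1.2

/-- Characterization of internal activity via basis exchanges. -/
theorem TA_intActive_iff (hM : IsMatroidOn E ℬ) {B : Finset α} (hB : B ∈ ℬ) {e : α}
    (he : e ∈ B) (σ : α → ℕ) :
    IntActive E ℬ σ B e ↔ ∀ g, insert g (B.erase e) ∈ ℬ → σ e ≤ σ g := by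
  constructor
  · rintro ⟨-, C, hC, hCsub, heC, hmin⟩ g hg
    rcases eq_or_ne g e with rfl | hge
    · exact le_refl _
    by_cases hgB : g ∈ B
    · have : insert g (B.erase e) = B.erase e :=
        Finset.insert_eq_self.mpr (Finset.mem_erase.mpr ⟨hge, hgB⟩)
      exact absurd (this ▸ hg) (TA_erase_notMem hM hB he)
    · obtain ⟨x, hx⟩ := hC.2.1 _ hg
      rw [Finset.mem_inter] at hx
      have hxC := hx.2
      have hxB' := hx.1
      rcases Finset.mem_insert.mp (hCsub hxC) with hxe | hxE
      · subst hxe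
        rcases Finset.mem_insert.mp hxB' with h1 | h1
        · exact absurd h1.symm hge
        · exact absurd rfl (Finset.mem_erase.mp h1).1
      · rcases Finset.mem_insert.mp hxB' with h1 | h1
        · exact h1 ▸ hmin x hxC
        · exact absurd (Finset.mem_of_mem_erase h1) (Finset.mem_sdiff.mp hxE).2
  · intro h
    obtain ⟨hco, hsub, heD⟩ := TA_fundCocircuit hM hB he
    refine ⟨he, _, hco, hsub, heD, fun g hg => h g (Finset.mem_filter.mp hg).2⟩

/-- Characterization of external activity via basis exchanges. -/
theorem TA_extActive_iff (hM : IsMatroidOn E ℬ) {B : Finset α} (hB : B ∈ ℬ) {f : α}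
    (hfE : f ∈ E) (hfB : f ∉ B) (σ : α → ℕ) :
    ExtActive E ℬ σ B f ↔ ∀ g ∈ B, insert f (B.erase g) ∈ ℬ → σ f ≤ σ g := by
  constructor
  · rintro ⟨-, C, hC, hCsub, hfC, hmin⟩ g hgB hg
    have hnot : ¬ C ⊆ insert f (B.erase g) := fun hsub => hC.2.1 ⟨_, hg, hsub⟩
    obtain ⟨x, hxC, hxB'⟩ := Finset.not_subset.mp hnot
    rcases Finset.mem_insert.mp (hCsub hxC) with h1 | h1
    · exact absurd (h1 ▸ Finset.mem_insert_self f (B.erase g)) hxB'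
    · have hxg : x = g := by
        by_contra hxg
        exact hxB' (Finset.mem_insert_of_mem (Finset.mem_erase.mpr ⟨hxg, h1⟩))
      exact hxg ▸ hmin x hxC
  · intro h
    refine ⟨hfB, _, TA_fundCircuit hM hB hfE hfB,
      Finset.insert_subset_insert _ (Finset.filter_subset _ _),
      Finset.mem_insert_self _ _, ?_⟩
    intro g hg
    rcases Finset.mem_insert.mp hg with h1 | h1
    · exact h1 ▸ le_refl _
    · rw [Finset.mem_filter] at h1
      exact h g h1.1 h1.2

/-- A basis is locally minimal for weight `k` if no basis exchange decreases weight. -/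
def LocalMin (ℬ : Finset (Finset α)) (k : α → ℤ) (B : Finset α) : Prop :=
  ∀ e ∈ B, ∀ g, g ∉ B → insert g (B.erase e) ∈ ℬ → k e ≤ k g

theorem TA_exists_localMin (hne : ℬ.Nonempty) (k : α → ℤ) :
    ∃ B ∈ ℬ, LocalMin ℬ k B := by
  obtain ⟨B, hB, hmin⟩ := Finset.exists_min_image ℬ (fun B => ∑ x ∈ B, k x) hne
  refine ⟨B, hB, fun e he g hg hB' => ?_⟩
  by_contra hlt
  push_neg at hlt
  have h1 : ∑ x ∈ insert g (B.erase e), k x = k g + ∑ x ∈ B.erase e, k x :=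
    Finset.sum_insert (fun h => hg (Finset.mem_of_mem_erase h))
  have h2 : k e + ∑ x ∈ B.erase e, k x = ∑ x ∈ B, k x :=
    Finset.add_sum_erase _ _ he
  have := hmin _ hB'
  simp only [h1] at this
  omega

theorem TA_localMin_aux (hM : IsMatroidOn E ℬ) {k : α → ℤ} (hk : Function.Injective k)
    {B₁ B₂ : Finset α} (hB₁ : B₁ ∈ ℬ) (hB₂ : B₂ ∈ ℬ) (h₂ : LocalMin ℬ k B₂)
    {e : α} (he : e ∈ B₁ \ B₂)
    (hemin : ∀ x ∈ (B₁ \ B₂) ∪ (B₂ \ B₁), k e ≤ k x) : False := by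
  rw [Finset.mem_sdiff] at he
  have heE : e ∈ E := hM.2.1 B₁ hB₁ he.1
  have hC := TA_fundCircuit hM hB₂ heE he.2
  have hsub : (insert e (B₂.filter fun h => insert e (B₂.erase h) ∈ ℬ)) ⊆ B₁ := by
    intro x hx
    rcases Finset.mem_insert.mp hx with h1 | h1
    · exact h1 ▸ he.1
    · rw [Finset.mem_filter] at h1
      have hxB₂ : x ∈ B₂ := h1.1
      have hle : k x ≤ k e := h₂ x hxB₂ e he.2 h1.2
      by_contra hxB₁
      have hge : k e ≤ k x := hemin x (Finset.mem_union_right _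
        (Finset.mem_sdiff.mpr ⟨hxB₂, hxB₁⟩))
      exact he.2 (hk (le_antisymm hle hge) ▸ hxB₂)
  exact hC.2.1 ⟨B₁, hB₁, hsub⟩

theorem TA_localMin_unique (hM : IsMatroidOn E ℬ) {k : α → ℤ}
    (hk : Function.Injective k) {B₁ B₂ : Finset α} (hB₁ : B₁ ∈ ℬ) (hB₂ : B₂ ∈ ℬ)
    (h₁ : LocalMin ℬ k B₁) (h₂ : LocalMin ℬ k B₂) : B₁ = B₂ := by
  by_contra hne
  have hΔ : ((B₁ \ B₂) ∪ (B₂ \ B₁)).Nonempty := by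
    rw [Finset.nonempty_iff_ne_empty]
    intro h
    rw [Finset.union_eq_empty, Finset.sdiff_eq_empty_iff_subset,
      Finset.sdiff_eq_empty_iff_subset] at h
    exact hne (Finset.Subset.antisymm h.1 h.2)
  obtain ⟨e, heΔ, hemin⟩ := Finset.exists_min_image _ k hΔ
  rcases Finset.mem_union.mp heΔ with he | he
  · exact TA_localMin_aux hM hk hB₁ hB₂ h₂ he hemin
  · refine TA_localMin_aux hM hk hB₂ hB₁ h₁ he (fun x hx => hemin x ?_)
    rwa [Finset.union_comm]

/-- Crapo's interval decomposition: every subset `S` of the ground set lies in the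
interval `[B \ I(B), B ∪ L(B)]` for exactly one basis `B`. -/
theorem crapo_interval_decomposition
    (E : Finset α) (ℬ : Finset (Finset α)) (hM : IsMatroidOn E ℬ)
    (σ : α → ℕ) (hσ : Function.Injective σ)
    (S : Finset α) (hS : S ⊆ E) :
    ∃! B : Finset α, B ∈ ℬ ∧
      B \ intSet E ℬ σ B ⊆ S ∧ S ⊆ B ∪ extSet E ℬ σ B := by
  classical
  set k : α → ℤ := fun x => if x ∈ S then -(σ x : ℤ) else (σ x : ℤ) with hkdef
  have hkinj : Function.Injective k := by
    intro a b hab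
    simp only [hkdef] at hab
    by_cases ha : a ∈ S <;> by_cases hb : b ∈ S <;> simp [ha, hb] at hab <;>
      exact hσ (by omega)
  have key : ∀ B ∈ ℬ, ((B \ intSet E ℬ σ B ⊆ S ∧ S ⊆ B ∪ extSet E ℬ σ B) ↔
      LocalMin ℬ k B) := by
    intro B hB
    have hBE : B ⊆ E := hM.2.1 B hB
    have hint : B \ intSet E ℬ σ B ⊆ S ↔
        ∀ e ∈ B, e ∉ S → ∀ g, insert g (B.erase e) ∈ ℬ → σ e ≤ σ g := by
      constructor
      · intro h e heB heS
        rw [← TA_intActive_iff hM hB heB σ]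
        by_contra hact
        have : e ∈ B \ intSet E ℬ σ B := Finset.mem_sdiff.mpr
          ⟨heB, fun hm => hact (Finset.mem_filter.mp hm).2⟩
        exact heS (h this)
      · intro h x hx
        rw [Finset.mem_sdiff] at hx
        by_contra hxS
        exact hx.2 (Finset.mem_filter.mpr ⟨hBE hx.1,
          (TA_intActive_iff hM hB hx.1 σ).mpr (h x hx.1 hxS)⟩)
    have hext : S ⊆ B ∪ extSet E ℬ σ B ↔
        ∀ f ∈ S, f ∉ B → ∀ g ∈ B, insert f (B.erase g) ∈ ℬ → σ f ≤ σ g := by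
      constructor
      · intro h f hfS hfB
        rw [← TA_extActive_iff hM hB (hS hfS) hfB σ]
        rcases Finset.mem_union.mp (h hfS) with h1 | h1
        · exact absurd h1 hfB
        · exact (Finset.mem_filter.mp h1).2
      · intro h x hxS
        by_cases hxB : x ∈ B
        · exact Finset.mem_union_left _ hxB
        · exact Finset.mem_union_right _ (Finset.mem_filter.mpr ⟨hS hxS,
            (TA_extActive_iff hM hB (hS hxS) hxB σ).mpr (h x hxS hxB)⟩)
    rw [hint, hext]
    constructor
    · rintro ⟨h1, h2⟩ e heB g hgB hg
      have hge : g ≠ e := fun h => hgB (h ▸ heB)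
      by_cases heS : e ∈ S <;> by_cases hgS : g ∈ S
      · -- e ∈ S, g ∈ S : use external activity of g
        have := h2 g hgS hgB e heB hg
        simp only [hkdef, heS, hgS, if_pos]
        omega
      · -- e ∈ S, g ∉ S : automatic
        simp only [hkdef, heS, hgS, if_pos, if_neg, not_false_iff]
        omega
      · -- e ∉ S, g ∈ S : contradiction
        have ha := h1 e heB heS g hg
        have hb := h2 g hgS hgB e heB hg
        exact absurd (hσ (le_antisymm hb ha)) hge
      · -- e ∉ S, g ∉ S
        have := h1 e heB heS g hg
        simp only [hkdef, heS, hgS, if_neg, not_false_iff]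
        omega
    · intro hloc
      constructor
      · intro e heB heS g hg
        rcases eq_or_ne g e with rfl | hge
        · exact le_refl _
        by_cases hgB : g ∈ B
        · have : insert g (B.erase e) = B.erase e :=
            Finset.insert_eq_self.mpr (Finset.mem_erase.mpr ⟨hge, hgB⟩)
          exact absurd (this ▸ hg) (TA_erase_notMem hM hB heB)
        · have := hloc e heB g hgB hg
          simp only [hkdef, heS, if_neg, not_false_iff] at this
          by_cases hgS : g ∈ S
          · rw [if_pos hgS] at this
            have h0 : σ e = 0 ∧ σ g = 0 := by omega
            exact absurd (hσ (h0.1.trans h0.2.symm)) hge.symm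
          · rw [if_neg hgS] at this
            omega
      · intro f hfS hfB g hgB hg
        have hfg : f ≠ g := fun h => hfB (h ▸ hgB)
        have := hloc g hgB f hfB hg
        simp only [hkdef, hfS, if_pos] at this
        by_cases hgS : g ∈ S
        · rw [if_pos hgS] at this
          omega
        · rw [if_neg hgS] at this
          have h0 : σ f = 0 ∧ σ g = 0 := by omega
          exact absurd (hσ (h0.1.trans h0.2.symm)) hfg
  obtain ⟨B₀, hB₀, hloc⟩ := TA_exists_localMin hM.1 k
  have hB₀cond := (key B₀ hB₀).mpr hloc
  refine ⟨B₀, ⟨hB₀, hB₀cond.1, hB₀cond.2⟩, ?_⟩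
  rintro B ⟨hB, h1, h2⟩
  exact TA_localMin_unique hM hkinj hB hB₀ ((key B hB).mp ⟨h1, h2⟩) hloc

end TutteActivities
end
end

section
/- For a matroid M on a totally ordered ground set E, the four-variable expansion holds: T(M;x+w,y+z) = Σ_{S⊆E} x^{|I(S)∩S|} w^{|I(S)∩S^c|} y^{|L(S)∩S|} z^{|L(S)∩S^c|}, where for a subset S, I(S) is the set of elements e that are minimum in some cocircuit contained in S^c∪{e}, and L(S) is the set of elements e that are minimum in some circuit contained in S∪{e}. -/
noncomputable section
attribute [local instance] Classical.propDecidable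

namespace TutteActivities

variable {α : Type*} [DecidableEq α]
set_option linter.unusedSectionVars false

/-- Gordon–Traldi internal activity for an arbitrary subset `S`:
elements `e` that are minimum in some cocircuit contained in `(E \ S) ∪ {e}`. -/
def subI (E : Finset α) (ℬ : Finset (Finset α)) (σ : α → ℕ) (S : Finset α) : Finset α :=
  E.filter fun e => ∃ C, Cocircuit E ℬ C ∧ C ⊆ insert e (E \ S) ∧ IsMinOf σ e C

/-- Gordon–Traldi external activity for an arbitrary subset `S`:
elements `e` that are minimum in some circuit contained in `S ∪ {e}`. -/
def subL (E : Finset α) (ℬ : Finset (Finset α)) (σ : α → ℕ) (S : Finset α) : Finset α :=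
  E.filter fun e => ∃ C, Circuit E ℬ C ∧ C ⊆ insert e S ∧ IsMinOf σ e C
section Aux

variable {E : Finset α} {ℬ : Finset (Finset α)}

lemma indep_mono {S T : Finset α} (h : S ⊆ T) (hT : Indep ℬ T) : Indep ℬ S := by
  obtain ⟨B, hB, hTB⟩ := hT; exact ⟨B, hB, h.trans hTB⟩

lemma indep_empty (hM : IsMatroidOn E ℬ) : Indep ℬ (∅ : Finset α) := by
  obtain ⟨B, hB⟩ := hM.1; exact ⟨B, hB, Finset.empty_subset B⟩

private lemma card_eq_aux (hM : IsMatroidOn E ℬ) :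
    ∀ (n : ℕ) (B₁ B₂ : Finset α), B₁ ∈ ℬ → B₂ ∈ ℬ → (B₁ \ B₂).card = n →
      B₁.card = B₂.card := by
  intro n
  induction n using Nat.strong_induction_on with
  | _ n ih =>
    intro B₁ B₂ h1 h2 hn
    rcases Nat.eq_zero_or_pos n with h0 | h0
    · subst h0
      have hsub : B₁ ⊆ B₂ := by
        rw [← Finset.sdiff_eq_empty_iff_subset]; exact Finset.card_eq_zero.mp hn
      rcases Finset.eq_empty_or_nonempty (B₂ \ B₁) with he | ⟨e, he⟩
      · rw [Finset.Subset.antisymm hsub (Finset.sdiff_eq_empty_iff_subset.mp he)]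
      · obtain ⟨f, hf, _⟩ := hM.2.2 B₂ h2 B₁ h1 e he
        rw [Finset.sdiff_eq_empty_iff_subset.mpr hsub] at hf
        exact absurd hf (Finset.notMem_empty f)
    · have hne : (B₁ \ B₂).Nonempty := Finset.card_pos.mp (hn ▸ h0)
      obtain ⟨e, he⟩ := hne
      obtain ⟨f, hf, hB'⟩ := hM.2.2 B₁ h1 B₂ h2 e he
      have heB₁ : e ∈ B₁ := (Finset.mem_sdiff.mp he).1
      have hfB₂ : f ∈ B₂ := (Finset.mem_sdiff.mp hf).1
      have hfB₁ : f ∉ B₁ := (Finset.mem_sdiff.mp hf).2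
      have hset : insert f (B₁.erase e) \ B₂ = (B₁ \ B₂).erase e := by
        ext x
        simp only [Finset.mem_sdiff, Finset.mem_insert, Finset.mem_erase]
        constructor
        · rintro ⟨hx | ⟨hxe, hxB⟩, hxB₂⟩
          · exact absurd (hx ▸ hfB₂) hxB₂
          · exact ⟨hxe, hxB, hxB₂⟩
        · rintro ⟨hxe, hxB, hxB₂⟩; exact ⟨Or.inr ⟨hxe, hxB⟩, hxB₂⟩
      have hcard' : (insert f (B₁.erase e) \ B₂).card = n - 1 := by
        rw [hset, Finset.card_erase_of_mem he, hn]
      have hc1 : (insert f (B₁.erase e)).card = B₁.card := by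
        rw [Finset.card_insert_of_notMem (fun h => hfB₁ (Finset.mem_of_mem_erase h)),
          Finset.card_erase_of_mem heB₁]
        have : 0 < B₁.card := Finset.card_pos.mpr ⟨e, heB₁⟩
        omega
      have := ih (n - 1) (by omega) _ _ hB' h2 hcard'
      omega

lemma card_eq_of_mem (hM : IsMatroidOn E ℬ) {B₁ B₂ : Finset α} (h1 : B₁ ∈ ℬ)
    (h2 : B₂ ∈ ℬ) : B₁.card = B₂.card :=
  card_eq_aux hM _ B₁ B₂ h1 h2 rfl

lemma rank_le_card (ℬ : Finset (Finset α)) (A : Finset α) : rank ℬ A ≤ A.card :=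
  Finset.sup_le fun _ _ => Finset.card_le_card Finset.inter_subset_right

lemma inter_card_le_rank {B : Finset α} (hB : B ∈ ℬ) (A : Finset α) :
    (B ∩ A).card ≤ rank ℬ A := by
  unfold rank; exact Finset.le_sup (f := fun B => (B ∩ A).card) hB

lemma rank_mono {A B : Finset α} (h : A ⊆ B) : rank ℬ A ≤ rank ℬ B :=
  Finset.sup_le fun B' hB' =>
    le_trans (Finset.card_le_card (Finset.inter_subset_inter Finset.Subset.rfl h))
      (inter_card_le_rank hB' B)

lemma rank_insert_le (ℬ : Finset (Finset α)) (A : Finset α) (f : α) :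
    rank ℬ (insert f A) ≤ rank ℬ A + 1 := by
  refine Finset.sup_le fun B hB => ?_
  have h1 : B ∩ insert f A ⊆ insert f (B ∩ A) := by
    intro x hx
    rcases Finset.mem_inter.mp hx with ⟨hxB, hxA⟩
    rcases Finset.mem_insert.mp hxA with h | h
    · exact Finset.mem_insert.mpr (Or.inl h)
    · exact Finset.mem_insert_of_mem (Finset.mem_inter.mpr ⟨hxB, h⟩)
  calc (B ∩ insert f A).card ≤ (insert f (B ∩ A)).card := Finset.card_le_card h1
    _ ≤ (B ∩ A).card + 1 := Finset.card_insert_le _ _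
    _ ≤ rank ℬ A + 1 := by have := inter_card_le_rank hB A; omega

lemma le_rank_of_indep {A J : Finset α} (hJ : Indep ℬ J) (hJA : J ⊆ A) :
    J.card ≤ rank ℬ A := by
  obtain ⟨B, hB, hJB⟩ := hJ
  have h1 : J ⊆ B ∩ A := Finset.subset_inter hJB hJA
  exact le_trans (Finset.card_le_card h1) (inter_card_le_rank hB A)

lemma rank_of_indep {A : Finset α} (hA : Indep ℬ A) : rank ℬ A = A.card :=
  le_antisymm (rank_le_card ℬ A) (le_rank_of_indep hA Finset.Subset.rfl)

lemma exists_rank_witness (hM : IsMatroidOn E ℬ) (A : Finset α) :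
    ∃ B ∈ ℬ, rank ℬ A = (B ∩ A).card :=
  Finset.exists_mem_eq_sup ℬ hM.1 _

lemma indep_of_rank_eq (hM : IsMatroidOn E ℬ) {A : Finset α}
    (h : rank ℬ A = A.card) : Indep ℬ A := by
  obtain ⟨B, hB, hrB⟩ := exists_rank_witness hM A
  have : B ∩ A = A := Finset.eq_of_subset_of_card_le Finset.inter_subset_right (by omega)
  exact ⟨B, hB, fun x hx => Finset.mem_inter.mp (this ▸ hx) |>.1⟩

lemma rank_ground (hM : IsMatroidOn E ℬ) {B : Finset α} (hB : B ∈ ℬ) :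
    rank ℬ E = B.card := by
  obtain ⟨B₀, hB₀, hrB₀⟩ := exists_rank_witness hM E
  rw [hrB₀, Finset.inter_eq_left.mpr (hM.2.1 B₀ hB₀), card_eq_of_mem hM hB₀ hB]

lemma rank_empty (ℬ : Finset (Finset α)) : rank ℬ (∅ : Finset α) = 0 :=
  Nat.le_zero.mp (le_trans (rank_le_card ℬ ∅) (by simp))

private lemma basis_descent (hM : IsMatroidOn E ℬ) (I₁ B₂ : Finset α) (hB₂ : B₂ ∈ ℬ) :
    ∀ (n : ℕ) (B : Finset α), B ∈ ℬ → I₁ ⊆ B → (B \ (I₁ ∪ B₂)).card = n →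
      ∃ B' ∈ ℬ, I₁ ⊆ B' ∧ B' ⊆ I₁ ∪ B₂ := by
  intro n
  induction n using Nat.strong_induction_on with
  | _ n ih =>
    intro B hB hI hn
    rcases Nat.eq_zero_or_pos n with h0 | h0
    · subst h0
      exact ⟨B, hB, hI, Finset.sdiff_eq_empty_iff_subset.mp (Finset.card_eq_zero.mp hn)⟩
    · obtain ⟨e, he⟩ := Finset.card_pos.mp (hn ▸ h0)
      have heB : e ∈ B := (Finset.mem_sdiff.mp he).1
      have heU : e ∉ I₁ ∪ B₂ := (Finset.mem_sdiff.mp he).2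
      have heB₂ : e ∉ B₂ := fun h => heU (Finset.mem_union_right _ h)
      have heI : e ∉ I₁ := fun h => heU (Finset.mem_union_left _ h)
      obtain ⟨f, hf, hB'⟩ := hM.2.2 B hB B₂ hB₂ e (Finset.mem_sdiff.mpr ⟨heB, heB₂⟩)
      have hfB₂ : f ∈ B₂ := (Finset.mem_sdiff.mp hf).1
      have hI' : I₁ ⊆ insert f (B.erase e) := fun x hx =>
        Finset.mem_insert_of_mem (Finset.mem_erase.mpr ⟨fun h => heI (h ▸ hx), hI hx⟩)
      have hset : insert f (B.erase e) \ (I₁ ∪ B₂) = (B \ (I₁ ∪ B₂)).erase e := by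
        ext x
        simp only [Finset.mem_sdiff, Finset.mem_insert, Finset.mem_erase]
        constructor
        · rintro ⟨hx | ⟨hxe, hxB⟩, hxU⟩
          · exact absurd (Finset.mem_union_right _ (hx ▸ hfB₂)) hxU
          · exact ⟨hxe, hxB, hxU⟩
        · rintro ⟨hxe, hxB, hxU⟩; exact ⟨Or.inr ⟨hxe, hxB⟩, hxU⟩
      exact ih (n - 1) (by omega) _ hB' hI'
        (by rw [hset, Finset.card_erase_of_mem he, hn])

lemma augment (hM : IsMatroidOn E ℬ) {I₁ I₂ : Finset α} (h1 : Indep ℬ I₁)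
    (h2 : Indep ℬ I₂) (hlt : I₁.card < I₂.card) :
    ∃ e, e ∉ I₁ ∧ e ∈ I₂ ∧ Indep ℬ (insert e I₁) := by
  obtain ⟨B₂, hB₂, hI₂B⟩ := h2
  obtain ⟨B, hB, hI₁B⟩ := h1
  obtain ⟨B₁, hB₁, hI₁, hBsub⟩ := basis_descent hM I₁ B₂ hB₂ _ B hB hI₁B rfl
  by_contra hcon
  push_neg at hcon
  have hB₁sub : B₁ ⊆ I₁ ∪ (B₂ \ I₂) := by
    intro x hx
    by_cases hxI₁ : x ∈ I₁
    · exact Finset.mem_union_left _ hxI₁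
    · have hxB₂ : x ∈ B₂ := by
        rcases Finset.mem_union.mp (hBsub hx) with h | h
        · exact absurd h hxI₁
        · exact h
      by_cases hxI₂ : x ∈ I₂
      · exact absurd ⟨B₁, hB₁, Finset.insert_subset hx hI₁⟩ (hcon x hxI₁ hxI₂)
      · exact Finset.mem_union_right _ (Finset.mem_sdiff.mpr ⟨hxB₂, hxI₂⟩)
  have hc1 : B₁.card ≤ I₁.card + (B₂ \ I₂).card :=
    le_trans (Finset.card_le_card hB₁sub) (Finset.card_union_le _ _)
  have hc2 : (B₂ \ I₂).card = B₂.card - I₂.card := Finset.card_sdiff_of_subset hI₂B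
  have hc3 : I₂.card ≤ B₂.card := Finset.card_le_card hI₂B
  have hc4 : B₁.card = B₂.card := card_eq_of_mem hM hB₁ hB₂
  omega

lemma exists_max_indep (hM : IsMatroidOn E ℬ) {A J : Finset α} (hJA : J ⊆ A)
    (hJ : Indep ℬ J) :
    ∃ J', J ⊆ J' ∧ J' ⊆ A ∧ Indep ℬ J' ∧ J'.card = rank ℬ A := by
  classical
  set s := A.powerset.filter fun T => Indep ℬ T ∧ J ⊆ T with hs
  have hne : s.Nonempty := ⟨J, by
    simp only [hs, Finset.mem_filter, Finset.mem_powerset]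
    exact ⟨hJA, hJ, Finset.Subset.rfl⟩⟩
  obtain ⟨J', hJ's, hmax⟩ := Finset.exists_max_image s Finset.card hne
  simp only [hs, Finset.mem_filter, Finset.mem_powerset] at hJ's
  obtain ⟨hJ'A, hJ'i, hJJ'⟩ := hJ's
  refine ⟨J', hJJ', hJ'A, hJ'i, ?_⟩
  have hle : J'.card ≤ rank ℬ A := le_rank_of_indep hJ'i hJ'A
  rcases eq_or_lt_of_le hle with h | h
  · exact h
  · exfalso
    obtain ⟨B₀, hB₀, hrB₀⟩ := exists_rank_witness hM A
    have hBA : Indep ℬ (B₀ ∩ A) := ⟨B₀, hB₀, Finset.inter_subset_left⟩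
    obtain ⟨e, heJ', heB, hei⟩ := augment hM hJ'i hBA (by omega)
    have hmem : insert e J' ∈ s := by
      simp only [hs, Finset.mem_filter, Finset.mem_powerset]
      exact ⟨Finset.insert_subset (Finset.mem_inter.mp heB).2 hJ'A, hei,
        hJJ'.trans (Finset.subset_insert e J')⟩
    have := hmax _ hmem
    rw [Finset.card_insert_of_notMem heJ'] at this
    omega

/-- `f` is spanned by `A`. -/
def spans (ℬ : Finset (Finset α)) (A : Finset α) (f : α) : Prop :=
  rank ℬ (insert f A) = rank ℬ A

lemma rank_insert_cases (ℬ : Finset (Finset α)) (A : Finset α) (f : α) :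
    rank ℬ (insert f A) = rank ℬ A ∨ rank ℬ (insert f A) = rank ℬ A + 1 := by
  have h1 := rank_mono (ℬ := ℬ) (Finset.subset_insert f A)
  have h2 := rank_insert_le ℬ A f
  omega

lemma spans_mono (hM : IsMatroidOn E ℬ) {A B : Finset α} {f : α} (hAB : A ⊆ B)
    (h : spans ℬ A f) : spans ℬ B f := by
  by_cases hfB : f ∈ B
  · unfold spans; rw [Finset.insert_eq_self.mpr hfB]
  · have hfA : f ∉ A := fun hf => hfB (hAB hf)
    obtain ⟨J, -, hJA, hJi, hJcard⟩ :=
      exists_max_indep hM (Finset.empty_subset A) (indep_empty hM)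
    have hfJ : f ∉ J := fun hf => hfA (hJA hf)
    have hdep : ¬ Indep ℬ (insert f J) := by
      intro hi
      have hle := le_rank_of_indep hi (Finset.insert_subset_insert f hJA)
      rw [h, Finset.card_insert_of_notMem hfJ] at hle
      omega
    obtain ⟨J', hJJ', hJ'B, hJ'i, hJ'card⟩ := exists_max_indep hM (hJA.trans hAB) hJi
    rcases rank_insert_cases ℬ B f with hc | hc
    · exact hc
    · exfalso
      obtain ⟨J'', hJ'J'', hJ''sub, hJ''i, hJ''card⟩ :=
        exists_max_indep hM (hJ'B.trans (Finset.subset_insert f B)) hJ'i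
      rw [hc, ← hJ'card] at hJ''card
      have hdiff : ∀ x ∈ J'', x ∉ J' → x = f := by
        intro x hx hxJ'
        by_contra hxf
        have hxB : x ∈ B := by
          rcases Finset.mem_insert.mp (hJ''sub hx) with h' | h'
          · exact absurd h' hxf
          · exact h'
        have hxi : Indep ℬ (insert x J') :=
          indep_mono (Finset.insert_subset hx hJ'J'') hJ''i
        have := le_rank_of_indep hxi (Finset.insert_subset hxB hJ'B)
        rw [Finset.card_insert_of_notMem hxJ', hJ'card] at this
        omega
      have hfJ'' : f ∈ J'' := by
        by_contra hf
        have : J'' ⊆ J' := by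
          intro x hx
          by_contra hxJ'
          exact hf ((hdiff x hx hxJ') ▸ hx)
        have := Finset.card_le_card this
        omega
      exact hdep (indep_mono (Finset.insert_subset hfJ'' (hJJ'.trans hJ'J'')) hJ''i)

lemma spans_insert_iff (hM : IsMatroidOn E ℬ) {A : Finset α} {e f : α}
    (he : spans ℬ A e) : spans ℬ (insert e A) f ↔ spans ℬ A f := by
  constructor
  · intro h
    have h1 : rank ℬ A ≤ rank ℬ (insert f A) := rank_mono (Finset.subset_insert f A)
    have h2 : rank ℬ (insert f A) ≤ rank ℬ (insert f (insert e A)) :=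
      rank_mono (Finset.insert_subset_insert f (Finset.subset_insert e A))
    unfold spans at h he ⊢
    omega
  · exact spans_mono hM (Finset.subset_insert e A)

end Aux

section Aux2

variable {E : Finset α} {ℬ : Finset (Finset α)} {σ : α → ℕ}

lemma exists_circuit (hM : IsMatroidOn E ℬ) {A : Finset α} {f : α} (hA : A ⊆ E)
    (hfE : f ∈ E) (hfA : f ∉ A) (h : spans ℬ A f) :
    ∃ C, Circuit E ℬ C ∧ f ∈ C ∧ C ⊆ insert f A := by
  classical
  obtain ⟨J, -, hJA, hJi, hJcard⟩ :=
    exists_max_indep hM (Finset.empty_subset A) (indep_empty hM)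
  have hfJ : f ∉ J := fun hf => hfA (hJA hf)
  have hdep : ¬ Indep ℬ (insert f J) := by
    intro hi
    have hle := le_rank_of_indep hi (Finset.insert_subset_insert f hJA)
    rw [h, Finset.card_insert_of_notMem hfJ] at hle
    omega
  set s := ((insert f J).powerset.filter fun D => ¬ Indep ℬ D) with hs
  have hne : s.Nonempty := ⟨insert f J, by
    simp only [hs, Finset.mem_filter, Finset.mem_powerset]
    exact ⟨Finset.Subset.rfl, hdep⟩⟩
  obtain ⟨C, hCs, hmin⟩ := Finset.exists_min_image s Finset.card hne
  simp only [hs, Finset.mem_filter, Finset.mem_powerset] at hCs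
  obtain ⟨hCsub, hCdep⟩ := hCs
  have hCE : C ⊆ E := hCsub.trans (Finset.insert_subset hfE (hJA.trans hA))
  have hmin' : ∀ D ⊂ C, Indep ℬ D := by
    intro D hD
    by_contra hDdep
    have hDs : D ∈ s := by
      simp only [hs, Finset.mem_filter, Finset.mem_powerset]
      exact ⟨hD.subset.trans hCsub, hDdep⟩
    have := hmin D hDs
    have := Finset.card_lt_card hD
    omega
  have hfC : f ∈ C := by
    by_contra hf
    refine hCdep (indep_mono (fun x hx => ?_) hJi)
    rcases Finset.mem_insert.mp (hCsub hx) with h' | h'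
    · exact absurd (h' ▸ hx) hf
    · exact h'
  exact ⟨C, ⟨hCE, hCdep, hmin'⟩, hfC, hCsub.trans (Finset.insert_subset_insert f hJA)⟩

lemma spans_of_circuit (hM : IsMatroidOn E ℬ) {C : Finset α} {e : α}
    (hC : Circuit E ℬ C) (he : e ∈ C) : spans ℬ (C.erase e) e := by
  have h1 : Indep ℬ (C.erase e) := hC.2.2 _ (Finset.erase_ssubset he)
  have h2 : rank ℬ (C.erase e) = C.card - 1 := by
    rw [rank_of_indep h1, Finset.card_erase_of_mem he]
  have h4 : rank ℬ C ≠ C.card := fun h' => hC.2.1 (indep_of_rank_eq hM h')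
  have h5 := rank_le_card ℬ C
  have h6 : rank ℬ (C.erase e) ≤ rank ℬ C := rank_mono (Finset.erase_subset _ _)
  have hpos : 0 < C.card := Finset.card_pos.mpr ⟨e, he⟩
  unfold spans
  rw [Finset.insert_erase he]
  omega

lemma spans_of_circuit_subset (hM : IsMatroidOn E ℬ) {A C : Finset α} {f : α}
    (hC : Circuit E ℬ C) (hfC : f ∈ C) (hCA : C ⊆ insert f A) : spans ℬ A f := by
  refine spans_mono hM (fun x hx => ?_) (spans_of_circuit hM hC hfC)
  obtain ⟨hxf, hxC⟩ := Finset.mem_erase.mp hx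
  rcases Finset.mem_insert.mp (hCA hxC) with h' | h'
  · exact absurd h' hxf
  · exact h'

lemma subL_iff (hM : IsMatroidOn E ℬ) (hσ : Function.Injective σ) {S : Finset α}
    {f : α} (hS : S ⊆ E) :
    f ∈ subL E ℬ σ S ↔ f ∈ E ∧ spans ℬ (S.filter fun g => σ f < σ g) f := by
  unfold subL
  rw [Finset.mem_filter]
  constructor
  · rintro ⟨hfE, C, hC, hCsub, hfC, hmin⟩
    refine ⟨hfE, spans_of_circuit_subset hM hC hfC fun x hx => ?_⟩
    rcases eq_or_ne x f with rfl | hxf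
    · exact Finset.mem_insert_self _ _
    · have hxS : x ∈ S := (Finset.mem_insert.mp (hCsub hx)).resolve_left hxf
      have hlt : σ f < σ x :=
        lt_of_le_of_ne (hmin x hx) fun h' => hxf (hσ h'.symm)
      exact Finset.mem_insert_of_mem (Finset.mem_filter.mpr ⟨hxS, hlt⟩)
  · rintro ⟨hfE, hsp⟩
    have hfilE : (S.filter fun g => σ f < σ g) ⊆ E := (Finset.filter_subset _ _).trans hS
    have hfA : f ∉ S.filter fun g => σ f < σ g := by simp
    obtain ⟨C, hC, hfC, hCsub⟩ := exists_circuit hM hfilE hfE hfA hsp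
    refine ⟨hfE, C, hC, hCsub.trans (Finset.insert_subset_insert _ (Finset.filter_subset _ _)),
      hfC, fun g hg => ?_⟩
    rcases Finset.mem_insert.mp (hCsub hg) with h' | h'
    · exact le_of_eq (congrArg σ h'.symm)
    · exact le_of_lt (Finset.mem_filter.mp h').2

lemma circuit_cocircuit_inter (hM : IsMatroidOn E ℬ) {C C' : Finset α} {e : α}
    (hC : Circuit E ℬ C) (hC' : Cocircuit E ℬ C') : C ∩ C' ≠ {e} := by
  intro heq
  have hemem : e ∈ C ∩ C' := heq ▸ Finset.mem_singleton_self e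
  have heC : e ∈ C := (Finset.mem_inter.mp hemem).1
  have heC' : e ∈ C' := (Finset.mem_inter.mp hemem).2
  have hsub : C.erase e ⊆ E \ C' := by
    intro x hx
    obtain ⟨hxe, hxC⟩ := Finset.mem_erase.mp hx
    refine Finset.mem_sdiff.mpr ⟨hC.1 hxC, fun hxC' => hxe ?_⟩
    have hx2 : x ∈ C ∩ C' := Finset.mem_inter.mpr ⟨hxC, hxC'⟩
    rw [heq] at hx2
    exact Finset.mem_singleton.mp hx2
  have hsp : spans ℬ (E \ C') e := spans_mono hM hsub (spans_of_circuit hM hC heC)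
  have hlt : rank ℬ (E \ C') < rank ℬ E := by
    obtain ⟨B₀, hB₀, hw⟩ := exists_rank_witness hM (E \ C')
    have hle : rank ℬ (E \ C') ≤ rank ℬ E := rank_mono (Finset.sdiff_subset)
    rcases lt_or_eq_of_le hle with h' | h'
    · exact h'
    · exfalso
      have hg : rank ℬ E = B₀.card := rank_ground hM hB₀
      have hBsub : B₀ ∩ (E \ C') = B₀ :=
        Finset.eq_of_subset_of_card_le Finset.inter_subset_left (by omega)
      obtain ⟨x, hx⟩ := hC'.2.1 B₀ hB₀
      have hx1 : x ∈ B₀ := (Finset.mem_inter.mp hx).1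
      have hx2 : x ∈ C' := (Finset.mem_inter.mp hx).2
      have hx3 : x ∈ B₀ ∩ (E \ C') := by rw [hBsub]; exact hx1
      exact (Finset.mem_sdiff.mp (Finset.mem_inter.mp hx3).2).2 hx2
  have hge : rank ℬ (insert e (E \ C')) = rank ℬ E := by
    obtain ⟨B, hB, hBdisj⟩ := hC'.2.2 (C'.erase e) (Finset.erase_ssubset heC')
    have hBsub : B ⊆ insert e (E \ C') := by
      intro x hx
      by_cases hxe : x = e
      · exact Finset.mem_insert.mpr (Or.inl hxe)
      · refine Finset.mem_insert_of_mem (Finset.mem_sdiff.mpr ⟨hM.2.1 B hB hx, fun hxC' => ?_⟩)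
        have hx2 : x ∈ B ∩ C'.erase e :=
          Finset.mem_inter.mpr ⟨hx, Finset.mem_erase.mpr ⟨hxe, hxC'⟩⟩
        rw [hBdisj] at hx2
        exact Finset.notMem_empty x hx2
    have h1 : rank ℬ E ≤ rank ℬ (insert e (E \ C')) := by
      have h2 := le_rank_of_indep ⟨B, hB, Finset.Subset.rfl⟩ hBsub
      rw [rank_ground hM hB]
      exact h2
    have h2 : rank ℬ (insert e (E \ C')) ≤ rank ℬ E :=
      rank_mono (Finset.insert_subset (hC'.1 heC') Finset.sdiff_subset)
    omega
  unfold spans at hsp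
  omega

end Aux2

section Aux3

variable {E : Finset α} {ℬ : Finset (Finset α)} {σ : α → ℕ}

/-- The dual matroid: complements of bases. -/
def dual (E : Finset α) (ℬ : Finset (Finset α)) : Finset (Finset α) := ℬ.image (E \ ·)

lemma basis_of_indep_card (hM : IsMatroidOn E ℬ) {J : Finset α} (hJ : Indep ℬ J)
    (hcard : J.card = rank ℬ E) : J ∈ ℬ := by
  obtain ⟨B, hB, hJB⟩ := hJ
  have hle : B.card ≤ J.card := by rw [hcard, rank_ground hM hB]
  rw [Finset.eq_of_subset_of_card_le hJB hle]
  exact hB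

lemma dual_exchange (hM : IsMatroidOn E ℬ) {B₁ B₂ : Finset α} (h1 : B₁ ∈ ℬ)
    (h2 : B₂ ∈ ℬ) {e : α} (he : e ∈ B₂ \ B₁) :
    ∃ f ∈ B₁ \ B₂, insert e (B₁.erase f) ∈ ℬ := by
  obtain ⟨heB₂, heB₁⟩ := Finset.mem_sdiff.mp he
  have hJ₀ : Indep ℬ (insert e (B₁ ∩ B₂)) :=
    ⟨B₂, h2, Finset.insert_subset heB₂ Finset.inter_subset_right⟩
  have hsub : insert e (B₁ ∩ B₂) ⊆ insert e B₁ :=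
    Finset.insert_subset_insert _ Finset.inter_subset_left
  have hrk : rank ℬ (insert e B₁) = B₁.card := by
    have hle : rank ℬ (insert e B₁) ≤ rank ℬ E :=
      rank_mono (Finset.insert_subset (hM.2.1 B₂ h2 heB₂) (hM.2.1 B₁ h1))
    have hge : B₁.card ≤ rank ℬ (insert e B₁) :=
      le_rank_of_indep ⟨B₁, h1, Finset.Subset.rfl⟩ (Finset.subset_insert _ _)
    rw [rank_ground hM h1] at hle
    omega
  obtain ⟨J, hJ₀J, hJsub, hJi, hJcard⟩ := exists_max_indep hM hsub hJ₀
  rw [hrk] at hJcard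
  have hJB : J ∈ ℬ := basis_of_indep_card hM hJi (by rw [hJcard, rank_ground hM h1])
  have heJ : e ∈ J := hJ₀J (Finset.mem_insert_self _ _)
  have h3 : J.erase e ⊆ B₁ := by
    intro x hx
    obtain ⟨hxe, hxJ⟩ := Finset.mem_erase.mp hx
    exact (Finset.mem_insert.mp (hJsub hxJ)).resolve_left hxe
  have h4 : B₁ ∩ J = J.erase e := by
    ext x
    simp only [Finset.mem_inter, Finset.mem_erase]
    constructor
    · rintro ⟨hxB, hxJ⟩
      exact ⟨fun h => heB₁ (h ▸ hxB), hxJ⟩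
    · rintro ⟨hxe, hxJ⟩
      exact ⟨h3 (Finset.mem_erase.mpr ⟨hxe, hxJ⟩), hxJ⟩
  have hcard1 : (B₁ \ J).card = 1 := by
    have h5 : (B₁ \ J).card + (B₁ ∩ J).card = B₁.card := Finset.card_sdiff_add_card_inter B₁ J
    have h6 : (J.erase e).card = J.card - 1 := Finset.card_erase_of_mem heJ
    have h7 : 0 < J.card := Finset.card_pos.mpr ⟨e, heJ⟩
    rw [h4, h6] at h5
    omega
  obtain ⟨f, hf⟩ := Finset.card_eq_one.mp hcard1
  have hfmem : f ∈ B₁ \ J := hf ▸ Finset.mem_singleton_self f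
  have hfB₁ : f ∈ B₁ := (Finset.mem_sdiff.mp hfmem).1
  have hfJ : f ∉ J := (Finset.mem_sdiff.mp hfmem).2
  have hfB₂ : f ∉ B₂ := fun h =>
    hfJ (hJ₀J (Finset.mem_insert_of_mem (Finset.mem_inter.mpr ⟨hfB₁, h⟩)))
  refine ⟨f, Finset.mem_sdiff.mpr ⟨hfB₁, hfB₂⟩, ?_⟩
  have heq : J = insert e (B₁.erase f) := by
    apply Finset.eq_of_subset_of_card_le
    · intro x hx
      rcases eq_or_ne x e with rfl | hxe
      · exact Finset.mem_insert_self _ _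
      · refine Finset.mem_insert_of_mem (Finset.mem_erase.mpr
          ⟨fun h => hfJ (h ▸ hx), h3 (Finset.mem_erase.mpr ⟨hxe, hx⟩)⟩)
    · have h8 : e ∉ B₁.erase f := fun h => heB₁ (Finset.mem_of_mem_erase h)
      rw [Finset.card_insert_of_notMem h8, Finset.card_erase_of_mem hfB₁]
      have h9 : 0 < B₁.card := Finset.card_pos.mpr ⟨f, hfB₁⟩
      omega
  rwa [← heq]

lemma indep_dual_iff {D : Finset α} (hD : D ⊆ E) :
    Indep (dual E ℬ) D ↔ ∃ B ∈ ℬ, B ∩ D = ∅ := by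
  unfold dual Indep
  constructor
  · rintro ⟨B', hB', hDB'⟩
    obtain ⟨B, hB, rfl⟩ := Finset.mem_image.mp hB'
    refine ⟨B, hB, Finset.eq_empty_of_forall_notMem fun x hx => ?_⟩
    obtain ⟨hxB, hxD⟩ := Finset.mem_inter.mp hx
    exact (Finset.mem_sdiff.mp (hDB' hxD)).2 hxB
  · rintro ⟨B, hB, hdisj⟩
    refine ⟨E \ B, Finset.mem_image_of_mem _ hB,
      fun x hx => Finset.mem_sdiff.mpr ⟨hD hx, fun hxB => ?_⟩⟩
    have h2 : x ∈ B ∩ D := Finset.mem_inter.mpr ⟨hxB, hx⟩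
    rw [hdisj] at h2
    exact Finset.notMem_empty x h2

lemma cocircuit_iff {C : Finset α} : Cocircuit E ℬ C ↔ Circuit E (dual E ℬ) C := by
  unfold Cocircuit Circuit
  constructor
  · rintro ⟨hCE, hmeet, hmin⟩
    refine ⟨hCE, ?_, ?_⟩
    · intro hi
      rw [indep_dual_iff hCE] at hi
      obtain ⟨B, hB, hdisj⟩ := hi
      obtain ⟨x, hx⟩ := hmeet B hB
      rw [hdisj] at hx
      exact Finset.notMem_empty x hx
    · intro D hD
      rw [indep_dual_iff (hD.subset.trans hCE)]
      exact hmin D hD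
  · rintro ⟨hCE, hdep, hmin⟩
    refine ⟨hCE, fun B hB => ?_, fun D hD => ?_⟩
    · rw [Finset.nonempty_iff_ne_empty]
      intro h
      exact hdep ((indep_dual_iff hCE).mpr ⟨B, hB, h⟩)
    · exact (indep_dual_iff (hD.subset.trans hCE)).mp (hmin D hD)

lemma dual_isMatroid (hM : IsMatroidOn E ℬ) : IsMatroidOn E (dual E ℬ) := by
  refine ⟨hM.1.image _, fun B hB => ?_, ?_⟩
  · obtain ⟨B₀, hB₀, rfl⟩ := Finset.mem_image.mp hB
    exact Finset.sdiff_subset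
  · rintro B₁' hB₁' B₂' hB₂' e he
    obtain ⟨B₁, hB₁, rfl⟩ := Finset.mem_image.mp hB₁'
    obtain ⟨B₂, hB₂, rfl⟩ := Finset.mem_image.mp hB₂'
    have heE : e ∈ E := (Finset.mem_sdiff.mp (Finset.mem_sdiff.mp he).1).1
    have he2 : e ∈ B₂ \ B₁ := by
      obtain ⟨hq1, hq2⟩ := Finset.mem_sdiff.mp he
      refine Finset.mem_sdiff.mpr ⟨?_, (Finset.mem_sdiff.mp hq1).2⟩
      by_contra h
      exact hq2 (Finset.mem_sdiff.mpr ⟨heE, h⟩)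
    obtain ⟨f, hf, hnew⟩ := dual_exchange hM hB₁ hB₂ he2
    have hfB₁ : f ∈ B₁ := (Finset.mem_sdiff.mp hf).1
    have hfB₂ : f ∉ B₂ := (Finset.mem_sdiff.mp hf).2
    have hfE : f ∈ E := hM.2.1 B₁ hB₁ hfB₁
    have heB₁ : e ∉ B₁ := (Finset.mem_sdiff.mp he2).2
    have hfe : f ≠ e := fun h => heB₁ (h ▸ hfB₁)
    refine ⟨f, Finset.mem_sdiff.mpr ⟨Finset.mem_sdiff.mpr ⟨hfE, hfB₂⟩,
      fun h => (Finset.mem_sdiff.mp h).2 hfB₁⟩, ?_⟩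
    have hset : insert f ((E \ B₁).erase e) = E \ insert e (B₁.erase f) := by
      ext x
      simp only [Finset.mem_insert, Finset.mem_erase, Finset.mem_sdiff]
      constructor
      · rintro (rfl | ⟨hxe, hxE, hxB₁⟩)
        · exact ⟨hfE, fun h => by
            rcases h with h | ⟨h1, _⟩
            · exact hfe h
            · exact h1 rfl⟩
        · exact ⟨hxE, fun h => by
            rcases h with h | ⟨_, h2⟩
            · exact hxe h
            · exact hxB₁ h2⟩
      · rintro ⟨hxE, hx⟩
        by_cases hxf : x = f
        · exact Or.inl hxf
        · exact Or.inr ⟨fun h => hx (Or.inl h), hxE, fun hxB₁ => hx (Or.inr ⟨hxf, hxB₁⟩)⟩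
    rw [hset]
    exact Finset.mem_image_of_mem _ hnew

lemma dual_dual (hM : IsMatroidOn E ℬ) : dual E (dual E ℬ) = ℬ := by
  unfold dual
  ext B
  rw [Finset.image_image]
  simp only [Finset.mem_image, Function.comp]
  constructor
  · rintro ⟨B', hB', rfl⟩
    rwa [Finset.sdiff_sdiff_eq_self (hM.2.1 B' hB')]
  · intro hB
    exact ⟨B, hB, Finset.sdiff_sdiff_eq_self (hM.2.1 B hB)⟩

lemma sdiff_inter_eq {A B : Finset α} (hA : A ⊆ E) : (E \ B) ∩ A = A \ B := by
  ext x
  simp only [Finset.mem_inter, Finset.mem_sdiff]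
  constructor
  · rintro ⟨⟨_, hxB⟩, hxA⟩
    exact ⟨hxA, hxB⟩
  · rintro ⟨hxA, hxB⟩
    exact ⟨⟨hA hxA, hxB⟩, hxA⟩

lemma rank_dual_add (hM : IsMatroidOn E ℬ) {A : Finset α} (hA : A ⊆ E) :
    rank (dual E ℬ) A + rank ℬ E = A.card + rank ℬ (E \ A) := by
  have key : ∀ B ∈ ℬ, ((E \ B) ∩ A).card + rank ℬ E = A.card + (B ∩ (E \ A)).card := by
    intro B hB
    have h1 : (E \ B) ∩ A = A \ B := sdiff_inter_eq hA
    have h2 : B ∩ (E \ A) = B \ A := by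
      rw [Finset.inter_comm]
      exact sdiff_inter_eq (hM.2.1 B hB)
    have h3 : (A \ B).card + (A ∩ B).card = A.card := Finset.card_sdiff_add_card_inter A B
    have h4 : (B ∩ A).card + (B \ A).card = B.card := Finset.card_inter_add_card_sdiff B A
    have h5 : rank ℬ E = B.card := rank_ground hM hB
    have h6 : (A ∩ B).card = (B ∩ A).card := by rw [Finset.inter_comm]
    rw [h1, h2]
    omega
  have hle : rank (dual E ℬ) A + rank ℬ E ≤ A.card + rank ℬ (E \ A) := by
    obtain ⟨B', hB', hw⟩ := exists_rank_witness (dual_isMatroid hM) A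
    obtain ⟨B, hB, rfl⟩ := Finset.mem_image.mp hB'
    have h7 := key B hB
    have h8 : (B ∩ (E \ A)).card ≤ rank ℬ (E \ A) := inter_card_le_rank hB _
    omega
  have hge : A.card + rank ℬ (E \ A) ≤ rank (dual E ℬ) A + rank ℬ E := by
    obtain ⟨B, hB, hw⟩ := exists_rank_witness hM (E \ A)
    have h7 := key B hB
    have h8 : ((E \ B) ∩ A).card ≤ rank (dual E ℬ) A :=
      inter_card_le_rank (Finset.mem_image_of_mem _ hB) A
    omega
  omega

lemma subI_eq_dual (E : Finset α) (ℬ : Finset (Finset α)) (σ : α → ℕ) (S : Finset α) :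
    subI E ℬ σ S = subL E (dual E ℬ) σ (E \ S) := by
  unfold subI subL
  apply Finset.filter_congr
  intro e _
  constructor <;> rintro ⟨C, hC, hsub, hmin⟩
  · exact ⟨C, cocircuit_iff.mp hC, hsub, hmin⟩
  · exact ⟨C, cocircuit_iff.mpr hC, hsub, hmin⟩

lemma subL_subset_ground (E : Finset α) (ℬ : Finset (Finset α)) (σ : α → ℕ)
    (S : Finset α) : subL E ℬ σ S ⊆ E := Finset.filter_subset _ _

lemma subI_subset_ground (E : Finset α) (ℬ : Finset (Finset α)) (σ : α → ℕ)
    (S : Finset α) : subI E ℬ σ S ⊆ E := Finset.filter_subset _ _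

end Aux3

section Aux4

variable {E : Finset α} {ℬ : Finset (Finset α)} {σ : α → ℕ}

private lemma count_aux (hM : IsMatroidOn E ℬ) (hσ : Function.Injective σ) :
    ∀ (n : ℕ) (S : Finset α), S.card = n →
    (S.filter fun f => spans ℬ (S.filter fun g => σ f < σ g) f).card + rank ℬ S = S.card := by
  intro n
  induction n using Nat.strong_induction_on with
  | _ n ih =>
    intro S hn
    rcases Finset.eq_empty_or_nonempty S with rfl | hne
    · simp [rank_empty]
    · obtain ⟨m, hm, hmin⟩ := Finset.exists_min_image S σ hne
      set S' := S.erase m with hS'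
      have hmS' : m ∉ S' := Finset.notMem_erase m S
      have hins : S = insert m S' := (Finset.insert_erase hm).symm
      have hcard' : S'.card = n - 1 := by rw [hS', Finset.card_erase_of_mem hm, hn]
      have hpos : 0 < n := by
        have := Finset.card_pos.mpr hne
        omega
      have hfilter : ∀ f ∈ S', (S.filter fun g => σ f < σ g) = S'.filter fun g => σ f < σ g := by
        intro f hf
        ext g
        simp only [Finset.mem_filter, hS', Finset.mem_erase]
        constructor
        · rintro ⟨hgS, hlt⟩
          refine ⟨⟨fun h => ?_, hgS⟩, hlt⟩
          subst h
          exact absurd hlt (not_lt.mpr (hmin f (Finset.mem_of_mem_erase hf)))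
        · rintro ⟨⟨_, hgS⟩, hlt⟩
          exact ⟨hgS, hlt⟩
      have hmfilter : (S.filter fun g => σ m < σ g) = S' := by
        ext g
        simp only [Finset.mem_filter, hS', Finset.mem_erase]
        constructor
        · rintro ⟨hgS, hlt⟩
          exact ⟨fun h => lt_irrefl _ (h ▸ hlt), hgS⟩
        · rintro ⟨hgm, hgS⟩
          exact ⟨hgS, lt_of_le_of_ne (hmin g hgS) fun h => hgm (hσ h).symm⟩
      have hcong : S'.filter (fun f => spans ℬ (S.filter fun g => σ f < σ g) f)
          = S'.filter fun f => spans ℬ (S'.filter fun g => σ f < σ g) f := by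
        apply Finset.filter_congr
        intro f hf
        rw [hfilter f hf]
      have hIH := ih (n - 1) (by omega) S' hcard'
      have hrkcases := rank_insert_cases ℬ S' m
      rw [← hins] at hrkcases
      have hfi : (S.filter fun f => spans ℬ (S.filter fun g => σ f < σ g) f).card
          = (S'.filter fun f => spans ℬ (S'.filter fun g => σ f < σ g) f).card
            + (if spans ℬ S' m then 1 else 0) := by
        rw [hins, Finset.filter_insert, ← hins, hmfilter]
        by_cases hsp : spans ℬ S' m
        · rw [if_pos hsp, if_pos hsp, Finset.card_insert_of_notMem
            (fun h => hmS' (Finset.mem_of_mem_filter m h)), hcong]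
        · rw [if_neg hsp, if_neg hsp, hcong]
          omega
      by_cases hsp : spans ℬ S' m
      · have hr : rank ℬ S = rank ℬ S' := by
          have h2 := hsp
          unfold spans at h2
          rw [← hins] at h2
          exact h2
        rw [hfi, if_pos hsp, hr]
        omega
      · have hr : rank ℬ S = rank ℬ S' + 1 := by
          rcases hrkcases with h | h
          · refine absurd ?_ hsp
            unfold spans
            rw [← hins]
            exact h
          · exact h
        rw [hfi, if_neg hsp, hr]
        omega

lemma count_ext (hM : IsMatroidOn E ℬ) (hσ : Function.Injective σ) {S : Finset α}
    (hS : S ⊆ E) : (subL E ℬ σ S ∩ S).card + rank ℬ S = S.card := by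
  have h1 : subL E ℬ σ S ∩ S = S.filter fun f => spans ℬ (S.filter fun g => σ f < σ g) f := by
    ext f
    simp only [Finset.mem_inter, Finset.mem_filter]
    constructor
    · rintro ⟨hf, hfS⟩
      exact ⟨hfS, ((subL_iff hM hσ hS).mp hf).2⟩
    · rintro ⟨hfS, hsp⟩
      exact ⟨(subL_iff hM hσ hS).mpr ⟨hS hfS, hsp⟩, hfS⟩
  rw [h1]
  exact count_aux hM hσ S.card S rfl

lemma count_int (hM : IsMatroidOn E ℬ) (hσ : Function.Injective σ) {S : Finset α}
    (hS : S ⊆ E) : (subI E ℬ σ S \ S).card + rank ℬ S = rank ℬ E := by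
  have hdualM := dual_isMatroid hM
  have h1 : subI E ℬ σ S \ S = subL E (dual E ℬ) σ (E \ S) ∩ (E \ S) := by
    ext x
    simp only [Finset.mem_sdiff, Finset.mem_inter, subI_eq_dual]
    constructor
    · rintro ⟨hx, hxS⟩
      have hxE : x ∈ E := subL_subset_ground E (dual E ℬ) σ (E \ S) hx
      exact ⟨hx, hxE, hxS⟩
    · rintro ⟨hx, _, hxS⟩
      exact ⟨hx, hxS⟩
  have h2 := count_ext hdualM hσ (Finset.sdiff_subset : E \ S ⊆ E)
  have h3 := rank_dual_add hM (Finset.sdiff_subset : E \ S ⊆ E)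
  have h4 : E \ (E \ S) = S := Finset.sdiff_sdiff_eq_self hS
  rw [h4] at h3
  rw [h1]
  omega

end Aux4

section Aux5

variable {E : Finset α} {ℬ : Finset (Finset α)} {σ : α → ℕ}

lemma sdiff_insert' (E S : Finset α) (e : α) : E \ insert e S = (E \ S).erase e := by
  ext x
  simp only [Finset.mem_sdiff, Finset.mem_insert, Finset.mem_erase]
  constructor
  · rintro ⟨hxE, hx⟩
    exact ⟨fun h => hx (Or.inl h), hxE, fun h => hx (Or.inr h)⟩
  · rintro ⟨hxe, hxE, hxS⟩
    exact ⟨hxE, fun h => h.elim hxe hxS⟩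

lemma sdiff_erase' {E : Finset α} {e : α} (heE : e ∈ E) (S : Finset α) :
    E \ (S.erase e) = insert e (E \ S) := by
  ext x
  simp only [Finset.mem_sdiff, Finset.mem_insert, Finset.mem_erase]
  constructor
  · rintro ⟨hxE, hx⟩
    by_cases hxe : x = e
    · exact Or.inl hxe
    · exact Or.inr ⟨hxE, fun h => hx ⟨hxe, h⟩⟩
  · rintro (rfl | ⟨hxE, hxS⟩)
    · exact ⟨heE, fun h => h.1 rfl⟩
    · exact ⟨hxE, fun h => hxS h.2⟩

lemma toggleLL (hM : IsMatroidOn E ℬ) (hσ : Function.Injective σ) {S : Finset α}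
    (hS : S ⊆ E) {e : α} (he : e ∈ subL E ℬ σ S) :
    subL E ℬ σ (insert e S) = subL E ℬ σ (S.erase e) := by
  have heE : e ∈ E := subL_subset_ground _ _ _ _ he
  have hiS : insert e S ⊆ E := Finset.insert_subset heE hS
  have heS : S.erase e ⊆ E := (Finset.erase_subset _ _).trans hS
  ext f
  rw [subL_iff hM hσ hiS, subL_iff hM hσ heS]
  by_cases hfe : σ f < σ e
  · have hfin : (insert e S).filter (fun g => σ f < σ g)
        = insert e ((S.erase e).filter fun g => σ f < σ g) := by
      ext g
      simp only [Finset.mem_filter, Finset.mem_insert, Finset.mem_erase]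
      constructor
      · rintro ⟨(rfl | hgS), hlt⟩
        · exact Or.inl rfl
        · by_cases hge : g = e
          · exact Or.inl hge
          · exact Or.inr ⟨⟨hge, hgS⟩, hlt⟩
      · rintro (rfl | ⟨⟨hge, hgS⟩, hlt⟩)
        · exact ⟨Or.inl rfl, hfe⟩
        · exact ⟨Or.inr hgS, hlt⟩
    rw [hfin]
    have heA : spans ℬ ((S.erase e).filter fun g => σ f < σ g) e := by
      have h1 := ((subL_iff hM hσ hS).mp he).2
      refine spans_mono hM ?_ h1
      intro g hg
      obtain ⟨hgS, hlt⟩ := Finset.mem_filter.mp hg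
      exact Finset.mem_filter.mpr ⟨Finset.mem_erase.mpr
        ⟨fun h => lt_irrefl _ (h ▸ hlt), hgS⟩, lt_trans hfe hlt⟩
    constructor
    · rintro ⟨hfE, hsp⟩
      exact ⟨hfE, (spans_insert_iff hM heA).mp hsp⟩
    · rintro ⟨hfE, hsp⟩
      exact ⟨hfE, (spans_insert_iff hM heA).mpr hsp⟩
  · have hfin : (insert e S).filter (fun g => σ f < σ g)
        = (S.erase e).filter fun g => σ f < σ g := by
      ext g
      simp only [Finset.mem_filter, Finset.mem_insert, Finset.mem_erase]
      constructor
      · rintro ⟨(rfl | hgS), hlt⟩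
        · exact absurd hlt hfe
        · exact ⟨⟨fun h => hfe (h ▸ hlt), hgS⟩, hlt⟩
      · rintro ⟨⟨_, hgS⟩, hlt⟩
        exact ⟨Or.inr hgS, hlt⟩
    rw [hfin]

lemma toggleLI (hM : IsMatroidOn E ℬ) (hσ : Function.Injective σ) {S : Finset α}
    (hS : S ⊆ E) {e : α} (he : e ∈ subL E ℬ σ S) :
    subI E ℬ σ (insert e S) = subI E ℬ σ (S.erase e) := by
  have heE : e ∈ E := subL_subset_ground _ _ _ _ he
  obtain ⟨-, Ce, hCe, hCesub, hCeC, hCemin⟩ := Finset.mem_filter.mp he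
  have hset1 : E \ insert e S = (E \ S).erase e := sdiff_insert' E S e
  have hset2 : E \ (S.erase e) = insert e (E \ S) := sdiff_erase' heE S
  ext f
  unfold subI
  simp only [Finset.mem_filter]
  rw [hset1, hset2]
  constructor
  · rintro ⟨hfE, C, hC, hsub, hmin⟩
    exact ⟨hfE, C, hC, hsub.trans (Finset.insert_subset_insert f
      ((Finset.erase_subset _ _).trans (Finset.subset_insert _ _))), hmin⟩
  · rintro ⟨hfE, C, hC, hsub, hCf, hmin⟩
    refine ⟨hfE, C, hC, ?_, hCf, hmin⟩
    have hfne : f ≠ e := by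
      rintro rfl
      have hCsub' : C ⊆ insert f (E \ S) := by
        intro x hx
        rcases Finset.mem_insert.mp (hsub hx) with h | h
        · exact Finset.mem_insert.mpr (Or.inl h)
        · exact h
      refine circuit_cocircuit_inter hM hCe hC (e := f) ?_
      apply Finset.Subset.antisymm
      · intro x hx
        obtain ⟨hxCe, hxC⟩ := Finset.mem_inter.mp hx
        rcases Finset.mem_insert.mp (hCesub hxCe) with rfl | hxS
        · exact Finset.mem_singleton.mpr rfl
        · rcases Finset.mem_insert.mp (hCsub' hxC) with rfl | hxES
          · exact Finset.mem_singleton.mpr rfl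
          · exact absurd hxS (Finset.mem_sdiff.mp hxES).2
      · intro x hx
        rw [Finset.mem_singleton] at hx
        subst hx
        exact Finset.mem_inter.mpr ⟨hCeC, hCf⟩
    have heC : e ∉ C := by
      intro heC2
      refine circuit_cocircuit_inter hM hCe hC (e := e) ?_
      apply Finset.Subset.antisymm
      · intro x hx
        obtain ⟨hxCe, hxC⟩ := Finset.mem_inter.mp hx
        rcases Finset.mem_insert.mp (hCesub hxCe) with rfl | hxS
        · exact Finset.mem_singleton.mpr rfl
        · rcases Finset.mem_insert.mp (hsub hxC) with rfl | h3
          · exfalso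
            have l1 : σ e ≤ σ x := hCemin x hxCe
            have l2 : σ x ≤ σ e := hmin e heC2
            exact hfne (hσ (le_antisymm l2 l1))
          · rcases Finset.mem_insert.mp h3 with rfl | h4
            · exact Finset.mem_singleton.mpr rfl
            · exact absurd hxS (Finset.mem_sdiff.mp h4).2
      · intro x hx
        rw [Finset.mem_singleton] at hx
        subst hx
        exact Finset.mem_inter.mpr ⟨hCeC, heC2⟩
    intro x hx
    rcases Finset.mem_insert.mp (hsub hx) with rfl | h1
    · exact Finset.mem_insert_self _ _
    · rcases Finset.mem_insert.mp h1 with rfl | h2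
      · exact absurd hx heC
      · exact Finset.mem_insert_of_mem (Finset.mem_erase.mpr
          ⟨fun h => heC (h ▸ hx), h2⟩)

lemma subI_dual_eq (hM : IsMatroidOn E ℬ) (σ : α → ℕ) (T : Finset α) :
    subI E (dual E ℬ) σ T = subL E ℬ σ (E \ T) := by
  rw [subI_eq_dual, dual_dual hM]

lemma toggleII (hM : IsMatroidOn E ℬ) (hσ : Function.Injective σ) {S : Finset α}
    (hS : S ⊆ E) {e : α} (he : e ∈ subI E ℬ σ S) :
    subI E ℬ σ (insert e S) = subI E ℬ σ (S.erase e) := by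
  have heE : e ∈ E := subI_subset_ground _ _ _ _ he
  have hD := dual_isMatroid hM
  have he' : e ∈ subL E (dual E ℬ) σ (E \ S) := by
    rw [← subI_eq_dual]
    exact he
  rw [subI_eq_dual, subI_eq_dual, sdiff_insert' E S e, sdiff_erase' heE S]
  exact (toggleLL hD hσ Finset.sdiff_subset he').symm

lemma toggleIL (hM : IsMatroidOn E ℬ) (hσ : Function.Injective σ) {S : Finset α}
    (hS : S ⊆ E) {e : α} (he : e ∈ subI E ℬ σ S) :
    subL E ℬ σ (insert e S) = subL E ℬ σ (S.erase e) := by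
  have heE : e ∈ E := subI_subset_ground _ _ _ _ he
  have hD := dual_isMatroid hM
  have he' : e ∈ subL E (dual E ℬ) σ (E \ S) := by
    rw [← subI_eq_dual]
    exact he
  have h := toggleLI hD hσ Finset.sdiff_subset he'
  rw [subI_dual_eq hM, subI_dual_eq hM] at h
  rw [sdiff_insert' E (E \ S) e, sdiff_erase' heE (E \ S),
    Finset.sdiff_sdiff_eq_self hS] at h
  exact h.symm

lemma toggle_both (hM : IsMatroidOn E ℬ) (hσ : Function.Injective σ) {S : Finset α}
    (hS : S ⊆ E) {e : α} (he : e ∈ subI E ℬ σ S ∪ subL E ℬ σ S) :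
    subI E ℬ σ (insert e S) = subI E ℬ σ (S.erase e) ∧
      subL E ℬ σ (insert e S) = subL E ℬ σ (S.erase e) := by
  rcases Finset.mem_union.mp he with h | h
  · exact ⟨toggleII hM hσ hS h, toggleIL hM hσ hS h⟩
  · exact ⟨toggleLI hM hσ hS h, toggleLL hM hσ hS h⟩

end Aux5

section Aux6

variable {E : Finset α} {ℬ : Finset (Finset α)} {σ : α → ℕ}

/-- The invariant of the toggle operation. -/
def Phi (E : Finset α) (ℬ : Finset (Finset α)) (σ : α → ℕ) (S : Finset α) :
    Finset α × Finset α × Finset α :=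
  (subI E ℬ σ S, subL E ℬ σ S, S \ (subI E ℬ σ S ∪ subL E ℬ σ S))

lemma phi_parts {S T : Finset α} (h : Phi E ℬ σ T = Phi E ℬ σ S) :
    subI E ℬ σ T = subI E ℬ σ S ∧ subL E ℬ σ T = subL E ℬ σ S ∧
      T \ (subI E ℬ σ T ∪ subL E ℬ σ T) = S \ (subI E ℬ σ S ∪ subL E ℬ σ S) := by
  unfold Phi at h
  rw [Prod.mk.injEq, Prod.mk.injEq] at h
  exact ⟨h.1, h.2.1, h.2.2⟩

lemma phi_mk {S T : Finset α} (h1 : subI E ℬ σ T = subI E ℬ σ S)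
    (h2 : subL E ℬ σ T = subL E ℬ σ S)
    (h3 : T \ (subI E ℬ σ T ∪ subL E ℬ σ T) = S \ (subI E ℬ σ S ∪ subL E ℬ σ S)) :
    Phi E ℬ σ T = Phi E ℬ σ S := by
  unfold Phi
  rw [Prod.mk.injEq, Prod.mk.injEq]
  exact ⟨h1, h2, h3⟩

lemma phi_insert (hM : IsMatroidOn E ℬ) (hσ : Function.Injective σ) {S : Finset α}
    (hS : S ⊆ E) {e : α} (he : e ∈ subI E ℬ σ S ∪ subL E ℬ σ S) :
    Phi E ℬ σ (insert e S) = Phi E ℬ σ S := by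
  obtain ⟨hI, hL⟩ := toggle_both hM hσ hS he
  by_cases heS : e ∈ S
  · rw [Finset.insert_eq_self.mpr heS]
  · have her : S.erase e = S := Finset.erase_eq_of_notMem heS
    rw [her] at hI hL
    refine phi_mk hI hL ?_
    rw [hI, hL]
    ext x
    simp only [Finset.mem_sdiff, Finset.mem_insert]
    constructor
    · rintro ⟨rfl | hxS, hxU⟩
      · exact absurd he hxU
      · exact ⟨hxS, hxU⟩
    · rintro ⟨hxS, hxU⟩
      exact ⟨Or.inr hxS, hxU⟩

lemma phi_erase (hM : IsMatroidOn E ℬ) (hσ : Function.Injective σ) {S : Finset α}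
    (hS : S ⊆ E) {e : α} (he : e ∈ subI E ℬ σ S ∪ subL E ℬ σ S) :
    Phi E ℬ σ (S.erase e) = Phi E ℬ σ S := by
  obtain ⟨hI, hL⟩ := toggle_both hM hσ hS he
  by_cases heS : e ∈ S
  · have hins : insert e S = S := Finset.insert_eq_self.mpr heS
    rw [hins] at hI hL
    refine phi_mk hI.symm hL.symm ?_
    rw [hI.symm, hL.symm]
    ext x
    simp only [Finset.mem_sdiff, Finset.mem_erase]
    constructor
    · rintro ⟨⟨_, hxS⟩, hxU⟩
      exact ⟨hxS, hxU⟩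
    · rintro ⟨hxS, hxU⟩
      exact ⟨⟨fun h => hxU (h ▸ he), hxS⟩, hxU⟩
  · rw [Finset.erase_eq_of_notMem heS]

lemma phi_union (hM : IsMatroidOn E ℬ) (hσ : Function.Injective σ) (D : Finset α) :
    ∀ {S : Finset α}, S ⊆ E → D ⊆ subI E ℬ σ S ∪ subL E ℬ σ S →
      Phi E ℬ σ (S ∪ D) = Phi E ℬ σ S := by
  induction D using Finset.induction_on with
  | empty =>
    intro S _ _
    rw [Finset.union_empty]
  | @insert a D ha ih =>
    intro S hS hsub
    have hDsub : D ⊆ subI E ℬ σ S ∪ subL E ℬ σ S :=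
      fun x hx => hsub (Finset.mem_insert_of_mem hx)
    have h1 : Phi E ℬ σ (S ∪ D) = Phi E ℬ σ S := ih hS hDsub
    obtain ⟨e1, e2, _⟩ := phi_parts h1
    have haU : a ∈ subI E ℬ σ (S ∪ D) ∪ subL E ℬ σ (S ∪ D) := by
      rw [e1, e2]
      exact hsub (Finset.mem_insert_self a D)
    have hSD : S ∪ D ⊆ E := Finset.union_subset hS (hDsub.trans
      (Finset.union_subset (subI_subset_ground E ℬ σ S) (subL_subset_ground E ℬ σ S)))
    have h2 : Phi E ℬ σ (insert a (S ∪ D)) = Phi E ℬ σ (S ∪ D) :=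
      phi_insert hM hσ hSD haU
    rw [Finset.union_insert, h2, h1]

lemma sdiff_insert_right (S D : Finset α) (a : α) : S \ insert a D = (S \ D).erase a := by
  ext x
  simp only [Finset.mem_sdiff, Finset.mem_insert, Finset.mem_erase]
  constructor
  · rintro ⟨hxS, hx⟩
    exact ⟨fun h => hx (Or.inl h), hxS, fun h => hx (Or.inr h)⟩
  · rintro ⟨hxa, hxS, hxD⟩
    exact ⟨hxS, fun h => h.elim hxa hxD⟩

lemma phi_sdiff (hM : IsMatroidOn E ℬ) (hσ : Function.Injective σ) (D : Finset α) :
    ∀ {S : Finset α}, S ⊆ E → D ⊆ subI E ℬ σ S ∪ subL E ℬ σ S →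
      Phi E ℬ σ (S \ D) = Phi E ℬ σ S := by
  induction D using Finset.induction_on with
  | empty =>
    intro S _ _
    rw [Finset.sdiff_empty]
  | @insert a D ha ih =>
    intro S hS hsub
    have hDsub : D ⊆ subI E ℬ σ S ∪ subL E ℬ σ S :=
      fun x hx => hsub (Finset.mem_insert_of_mem hx)
    have h1 : Phi E ℬ σ (S \ D) = Phi E ℬ σ S := ih hS hDsub
    obtain ⟨e1, e2, _⟩ := phi_parts h1
    have haU : a ∈ subI E ℬ σ (S \ D) ∪ subL E ℬ σ (S \ D) := by
      rw [e1, e2]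
      exact hsub (Finset.mem_insert_self a D)
    have hSD : S \ D ⊆ E := Finset.sdiff_subset.trans hS
    have h2 : Phi E ℬ σ ((S \ D).erase a) = Phi E ℬ σ (S \ D) :=
      phi_erase hM hσ hSD haU
    rw [sdiff_insert_right, h2, h1]

lemma box_phi (hM : IsMatroidOn E ℬ) (hσ : Function.Injective σ) {S : Finset α}
    (hS : S ⊆ E) {X : Finset α} (hX : X ⊆ subI E ℬ σ S ∪ subL E ℬ σ S) :
    Phi E ℬ σ ((S \ (subI E ℬ σ S ∪ subL E ℬ σ S)) ∪ X) = Phi E ℬ σ S := by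
  set U := subI E ℬ σ S ∪ subL E ℬ σ S with hU
  have hKX : (S \ U) ∪ X = (S \ (U \ X)) ∪ X := by
    ext x
    simp only [Finset.mem_union, Finset.mem_sdiff]
    constructor
    · rintro (⟨hxS, hxU⟩ | hxX)
      · exact Or.inl ⟨hxS, fun h => hxU h.1⟩
      · exact Or.inr hxX
    · rintro (⟨hxS, hx⟩ | hxX)
      · by_cases hxX : x ∈ X
        · exact Or.inr hxX
        · exact Or.inl ⟨hxS, fun h => hx ⟨h, hxX⟩⟩
      · exact Or.inr hxX
  rw [hKX]
  have h1 : Phi E ℬ σ (S \ (U \ X)) = Phi E ℬ σ S :=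
    phi_sdiff hM hσ (U \ X) hS Finset.sdiff_subset
  obtain ⟨e1, e2, _⟩ := phi_parts h1
  have hS' : S \ (U \ X) ⊆ E := Finset.sdiff_subset.trans hS
  have hXU : X ⊆ subI E ℬ σ (S \ (U \ X)) ∪ subL E ℬ σ (S \ (U \ X)) := by
    rw [e1, e2]
    exact hX
  exact (phi_union hM hσ X hS' hXU).trans h1

lemma fiber_eq (hM : IsMatroidOn E ℬ) (hσ : Function.Injective σ) {S : Finset α}
    (hS : S ⊆ E) :
    E.powerset.filter (fun T => Phi E ℬ σ T = Phi E ℬ σ S)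
      = ((subI E ℬ σ S ∪ subL E ℬ σ S).powerset).image
          fun X => (S \ (subI E ℬ σ S ∪ subL E ℬ σ S)) ∪ X := by
  ext T
  simp only [Finset.mem_filter, Finset.mem_powerset, Finset.mem_image]
  constructor
  · rintro ⟨hTE, hphi⟩
    obtain ⟨e1, e2, e3⟩ := phi_parts hphi
    refine ⟨T ∩ (subI E ℬ σ S ∪ subL E ℬ σ S), Finset.inter_subset_right, ?_⟩
    rw [← e3, e1, e2, Finset.sdiff_union_inter]
  · rintro ⟨X, hXU, rfl⟩
    refine ⟨Finset.union_subset (Finset.sdiff_subset.trans hS)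
      (hXU.trans (Finset.union_subset (subI_subset_ground E ℬ σ S)
        (subL_subset_ground E ℬ σ S))), box_phi hM hσ hS hXU⟩

lemma subI_inter_subL (hM : IsMatroidOn E ℬ) {S : Finset α} (hS : S ⊆ E) :
    subI E ℬ σ S ∩ subL E ℬ σ S = ∅ := by
  refine Finset.eq_empty_of_forall_notMem fun e he => ?_
  obtain ⟨heI, heL⟩ := Finset.mem_inter.mp he
  obtain ⟨-, C', hC', hsub', hmem', hmin'⟩ := Finset.mem_filter.mp heI
  obtain ⟨-, C, hC, hsub, hmem, hmin⟩ := Finset.mem_filter.mp heL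
  refine circuit_cocircuit_inter hM hC hC' (e := e) ?_
  apply Finset.Subset.antisymm
  · intro x hx
    obtain ⟨hxC, hxC'⟩ := Finset.mem_inter.mp hx
    rcases Finset.mem_insert.mp (hsub hxC) with rfl | hxS
    · exact Finset.mem_singleton.mpr rfl
    · rcases Finset.mem_insert.mp (hsub' hxC') with rfl | hxES
      · exact Finset.mem_singleton.mpr rfl
      · exact absurd hxS (Finset.mem_sdiff.mp hxES).2
  · intro x hx
    rw [Finset.mem_singleton] at hx
    subst hx
    exact Finset.mem_inter.mpr ⟨hmem, hmem'⟩

end Aux6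

section Aux7

variable {E : Finset α} {ℬ : Finset (Finset α)} {σ : α → ℕ}

lemma binom_sum (u v : ℤ) (I : Finset α) :
    ∑ P ∈ I.powerset, u ^ P.card * v ^ (I \ P).card = (u + v) ^ I.card := by
  induction I using Finset.induction_on with
  | empty => simp
  | @insert a I' ha ih =>
    have hdisj : Disjoint I'.powerset (I'.powerset.image (insert a)) := by
      rw [Finset.disjoint_left]
      intro P hP hP2
      obtain ⟨X, hX, rfl⟩ := Finset.mem_image.mp hP2
      exact ha (Finset.mem_powerset.mp hP (Finset.mem_insert_self a X))
    have hinj : ∀ X ∈ I'.powerset, ∀ Y ∈ I'.powerset, insert a X = insert a Y → X = Y := by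
      intro X hX Y hY h
      have haX : a ∉ X := fun h' => ha (Finset.mem_powerset.mp hX h')
      have haY : a ∉ Y := fun h' => ha (Finset.mem_powerset.mp hY h')
      rw [← Finset.erase_insert haX, h, Finset.erase_insert haY]
    rw [Finset.powerset_insert, Finset.sum_union hdisj, Finset.sum_image hinj]
    have h1 : ∀ P ∈ I'.powerset, u ^ P.card * v ^ (insert a I' \ P).card
        = v * (u ^ P.card * v ^ (I' \ P).card) := by
      intro P hP
      have haP : a ∉ P := fun h' => ha (Finset.mem_powerset.mp hP h')
      have hins : insert a I' \ P = insert a (I' \ P) := by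
        ext x
        simp only [Finset.mem_sdiff, Finset.mem_insert]
        constructor
        · rintro ⟨rfl | hxI, hxP⟩
          · exact Or.inl rfl
          · exact Or.inr ⟨hxI, hxP⟩
        · rintro (rfl | ⟨hxI, hxP⟩)
          · exact ⟨Or.inl rfl, haP⟩
          · exact ⟨Or.inr hxI, hxP⟩
      rw [hins, Finset.card_insert_of_notMem (fun h' => ha (Finset.mem_sdiff.mp h').1),
        pow_succ]
      ring
    have h2 : ∀ X ∈ I'.powerset, u ^ (insert a X).card * v ^ (insert a I' \ insert a X).card
        = u * (u ^ X.card * v ^ (I' \ X).card) := by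
      intro X hX
      have haX : a ∉ X := fun h' => ha (Finset.mem_powerset.mp hX h')
      have hins : insert a I' \ insert a X = I' \ X := by
        ext x
        simp only [Finset.mem_sdiff, Finset.mem_insert]
        constructor
        · rintro ⟨rfl | hxI, hx⟩
          · exact absurd (Or.inl rfl) hx
          · exact ⟨hxI, fun h' => hx (Or.inr h')⟩
        · rintro ⟨hxI, hxX⟩
          exact ⟨Or.inr hxI, fun h' => h'.elim (fun h'' => ha (h'' ▸ hxI)) hxX⟩
      rw [hins, Finset.card_insert_of_notMem haX, pow_succ]
      ring
    rw [Finset.sum_congr rfl h1, Finset.sum_congr rfl h2, ← Finset.mul_sum,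
      ← Finset.mul_sum, ih, Finset.card_insert_of_notMem ha, pow_succ]
    ring

lemma binom2 (u v s t : ℤ) {I L : Finset α} (hd : I ∩ L = ∅) :
    ∑ X ∈ (I ∪ L).powerset,
        u ^ (X ∩ I).card * v ^ (I \ X).card * s ^ (X ∩ L).card * t ^ (L \ X).card
      = (u + v) ^ I.card * (s + t) ^ L.card := by
  classical
  have hdisj : ∀ x, x ∈ I → x ∈ L → False := by
    intro x hxI hxL
    have : x ∈ I ∩ L := Finset.mem_inter.mpr ⟨hxI, hxL⟩
    rw [hd] at this
    exact Finset.notMem_empty x this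
  rw [show ∑ X ∈ (I ∪ L).powerset,
        u ^ (X ∩ I).card * v ^ (I \ X).card * s ^ (X ∩ L).card * t ^ (L \ X).card
      = ∑ p ∈ I.powerset ×ˢ L.powerset,
        u ^ p.1.card * v ^ (I \ p.1).card * s ^ p.2.card * t ^ (L \ p.2).card from ?_]
  · rw [Finset.sum_product]
    have : ∀ P ∈ I.powerset,
        ∑ Q ∈ L.powerset, u ^ P.card * v ^ (I \ P).card * s ^ Q.card * t ^ (L \ Q).card
          = (u ^ P.card * v ^ (I \ P).card) * ∑ Q ∈ L.powerset, s ^ Q.card * t ^ (L \ Q).card := by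
      intro P _
      rw [Finset.mul_sum]
      apply Finset.sum_congr rfl
      intro Q _
      ring
    rw [Finset.sum_congr rfl this, ← Finset.sum_mul, binom_sum, binom_sum]
  · refine Finset.sum_nbij' (fun X => (X ∩ I, X ∩ L)) (fun p => p.1 ∪ p.2) ?_ ?_ ?_ ?_ ?_
    · intro X hX
      rw [Finset.mem_powerset] at hX
      exact Finset.mem_product.mpr ⟨Finset.mem_powerset.mpr Finset.inter_subset_right,
        Finset.mem_powerset.mpr Finset.inter_subset_right⟩
    · intro p hp
      rw [Finset.mem_product, Finset.mem_powerset, Finset.mem_powerset] at hp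
      exact Finset.mem_powerset.mpr (Finset.union_subset_union hp.1 hp.2)
    · intro X hX
      rw [Finset.mem_powerset] at hX
      ext x
      simp only [Finset.mem_union, Finset.mem_inter]
      constructor
      · rintro (⟨h1, _⟩ | ⟨h1, _⟩) <;> exact h1
      · intro hx
        rcases Finset.mem_union.mp (hX hx) with h | h
        · exact Or.inl ⟨hx, h⟩
        · exact Or.inr ⟨hx, h⟩
    · intro p hp
      rw [Finset.mem_product, Finset.mem_powerset, Finset.mem_powerset] at hp
      obtain ⟨hp1, hp2⟩ := hp
      have e1 : (p.1 ∪ p.2) ∩ I = p.1 := by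
        ext x
        simp only [Finset.mem_inter, Finset.mem_union]
        constructor
        · rintro ⟨h1 | h1, h2⟩
          · exact h1
          · exact absurd h2 (fun h' => hdisj x h' (hp2 h1))
        · intro hx
          exact ⟨Or.inl hx, hp1 hx⟩
      have e2 : (p.1 ∪ p.2) ∩ L = p.2 := by
        ext x
        simp only [Finset.mem_inter, Finset.mem_union]
        constructor
        · rintro ⟨h1 | h1, h2⟩
          · exact absurd h2 (fun h' => hdisj x (hp1 h1) h')
          · exact h1
        · intro hx
          exact ⟨Or.inr hx, hp2 hx⟩
      show ((p.1 ∪ p.2) ∩ I, (p.1 ∪ p.2) ∩ L) = p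
      rw [e1, e2]
    · intro X _
      have hI : I \ (X ∩ I) = I \ X := by
        ext x
        simp only [Finset.mem_sdiff, Finset.mem_inter]
        constructor
        · rintro ⟨hxI, hx⟩
          exact ⟨hxI, fun h' => hx ⟨h', hxI⟩⟩
        · rintro ⟨hxI, hx⟩
          exact ⟨hxI, fun h' => hx h'.1⟩
      have hL : L \ (X ∩ L) = L \ X := by
        ext x
        simp only [Finset.mem_sdiff, Finset.mem_inter]
        constructor
        · rintro ⟨hxL, hx⟩
          exact ⟨hxL, fun h' => hx ⟨h', hxL⟩⟩
        · rintro ⟨hxL, hx⟩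
          exact ⟨hxL, fun h' => hx h'.1⟩
      rw [hI, hL]

end Aux7

/-- The Gordon–Traldi four-variable subset expansion of the Tutte polynomial. -/
theorem gordon_traldi_four_variable_expansion
    (E : Finset α) (ℬ : Finset (Finset α)) (hM : IsMatroidOn E ℬ)
    (σ : α → ℕ) (hσ : Function.Injective σ) (x w y z : ℤ) :
    ∑ S ∈ E.powerset,
        x ^ (subI E ℬ σ S ∩ S).card * w ^ (subI E ℬ σ S \ S).card *
          y ^ (subL E ℬ σ S ∩ S).card * z ^ (subL E ℬ σ S \ S).card =
      tutte E ℬ (x + w) (y + z) := by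
  classical
  have hmaps : ∀ S ∈ E.powerset, Phi E ℬ σ S ∈ E.powerset.image (Phi E ℬ σ) :=
    fun S hS => Finset.mem_image_of_mem _ hS
  have hL := Finset.sum_fiberwise_of_maps_to hmaps
    (fun S => x ^ (subI E ℬ σ S ∩ S).card * w ^ (subI E ℬ σ S \ S).card *
      y ^ (subL E ℬ σ S ∩ S).card * z ^ (subL E ℬ σ S \ S).card)
  have hR := Finset.sum_fiberwise_of_maps_to hmaps
    (fun S => (x + w - 1) ^ (subI E ℬ σ S \ S).card *
      (y + z - 1) ^ (subL E ℬ σ S ∩ S).card)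
  have htutte : tutte E ℬ (x + w) (y + z)
      = ∑ S ∈ E.powerset, (x + w - 1) ^ (subI E ℬ σ S \ S).card *
          (y + z - 1) ^ (subL E ℬ σ S ∩ S).card := by
    unfold tutte
    apply Finset.sum_congr rfl
    intro A hA
    have hAE := Finset.mem_powerset.mp hA
    have h1 := count_int hM hσ hAE
    have h2 := count_ext hM hσ hAE
    have e1 : rank ℬ E - rank ℬ A = (subI E ℬ σ A \ A).card := by omega
    have e2 : A.card - rank ℬ A = (subL E ℬ σ A ∩ A).card := by omega
    rw [e1, e2]
  rw [htutte, ← hL, ← hR]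
  apply Finset.sum_congr rfl
  intro k hk
  obtain ⟨S₀, hS₀mem, rfl⟩ := Finset.mem_image.mp hk
  have hS₀ : S₀ ⊆ E := Finset.mem_powerset.mp hS₀mem
  have hfib := fiber_eq hM hσ hS₀
  set I := subI E ℬ σ S₀ with hIdef
  set L := subL E ℬ σ S₀ with hLdef
  set K := S₀ \ (I ∪ L) with hKdef
  have hd : I ∩ L = ∅ := subI_inter_subL hM hS₀
  have hKdisj : ∀ a, a ∈ K → a ∈ I ∪ L → False := by
    intro a ha h2
    exact (Finset.mem_sdiff.mp ha).2 h2
  have hrecover : ∀ X ⊆ I ∪ L, (K ∪ X) ∩ (I ∪ L) = X := by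
    intro X hX
    ext a
    constructor
    · intro ha
      obtain ⟨h1, h2⟩ := Finset.mem_inter.mp ha
      rcases Finset.mem_union.mp h1 with h | h
      · exact (hKdisj a h h2).elim
      · exact h
    · intro ha
      exact Finset.mem_inter.mpr ⟨Finset.mem_union_right _ ha, hX ha⟩
  have hinj : ∀ X ∈ (I ∪ L).powerset, ∀ Y ∈ (I ∪ L).powerset, K ∪ X = K ∪ Y → X = Y := by
    intro X hX Y hY h
    rw [← hrecover X (Finset.mem_powerset.mp hX), ← hrecover Y (Finset.mem_powerset.mp hY), h]
  rw [hfib, Finset.sum_image hinj, Finset.sum_image hinj]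
  have hsub2 : ∀ X ∈ (I ∪ L).powerset,
      subI E ℬ σ (K ∪ X) = I ∧ subL E ℬ σ (K ∪ X) = L := by
    intro X hX
    have hbp := box_phi hM hσ hS₀ (Finset.mem_powerset.mp hX)
    obtain ⟨e1, e2, -⟩ := phi_parts hbp
    exact ⟨e1, e2⟩
  have hIT : ∀ (M : Finset α), (∀ a ∈ M, a ∈ I ∪ L) → ∀ X ⊆ I ∪ L,
      (M ∩ (K ∪ X) = X ∩ M ∧ M \ (K ∪ X) = M \ X) := by
    intro M hM' X hX
    constructor
    · ext a
      constructor
      · intro ha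
        obtain ⟨haM, haT⟩ := Finset.mem_inter.mp ha
        rcases Finset.mem_union.mp haT with h | h
        · exact (hKdisj a h (hM' a haM)).elim
        · exact Finset.mem_inter.mpr ⟨h, haM⟩
      · intro ha
        obtain ⟨haX, haM⟩ := Finset.mem_inter.mp ha
        exact Finset.mem_inter.mpr ⟨haM, Finset.mem_union_right _ haX⟩
    · ext a
      constructor
      · intro ha
        obtain ⟨haM, haT⟩ := Finset.mem_sdiff.mp ha
        exact Finset.mem_sdiff.mpr ⟨haM, fun h => haT (Finset.mem_union_right _ h)⟩
      · intro ha
        obtain ⟨haM, haX⟩ := Finset.mem_sdiff.mp ha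
        refine Finset.mem_sdiff.mpr ⟨haM, fun h => ?_⟩
        rcases Finset.mem_union.mp h with h' | h'
        · exact hKdisj a h' (hM' a haM)
        · exact haX h'
  have hIin : ∀ a ∈ I, a ∈ I ∪ L := fun a ha => Finset.mem_union_left _ ha
  have hLin : ∀ a ∈ L, a ∈ I ∪ L := fun a ha => Finset.mem_union_right _ ha
  have e_left : (∑ X ∈ (I ∪ L).powerset,
      x ^ (subI E ℬ σ (K ∪ X) ∩ (K ∪ X)).card * w ^ (subI E ℬ σ (K ∪ X) \ (K ∪ X)).card *
        y ^ (subL E ℬ σ (K ∪ X) ∩ (K ∪ X)).card * z ^ (subL E ℬ σ (K ∪ X) \ (K ∪ X)).card)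
      = (x + w) ^ I.card * (y + z) ^ L.card := by
    rw [← binom2 x w y z hd]
    apply Finset.sum_congr rfl
    intro X hX
    have hXsub := Finset.mem_powerset.mp hX
    obtain ⟨eI, eL⟩ := hsub2 X hX
    obtain ⟨fI1, fI2⟩ := hIT I hIin X hXsub
    obtain ⟨fL1, fL2⟩ := hIT L hLin X hXsub
    rw [eI, eL, fI1, fI2, fL1, fL2]
  have e_right : (∑ X ∈ (I ∪ L).powerset,
      (x + w - 1) ^ (subI E ℬ σ (K ∪ X) \ (K ∪ X)).card *
        (y + z - 1) ^ (subL E ℬ σ (K ∪ X) ∩ (K ∪ X)).card)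
      = (x + w) ^ I.card * (y + z) ^ L.card := by
    have hb := binom2 (1 : ℤ) (x + w - 1) (y + z - 1) (1 : ℤ) hd
    have hb1 : (1 : ℤ) + (x + w - 1) = x + w := by ring
    have hb2 : (y + z - 1) + (1 : ℤ) = y + z := by ring
    rw [hb1, hb2] at hb
    rw [← hb]
    apply Finset.sum_congr rfl
    intro X hX
    have hXsub := Finset.mem_powerset.mp hX
    obtain ⟨eI, eL⟩ := hsub2 X hX
    obtain ⟨fI1, fI2⟩ := hIT I hIin X hXsub
    obtain ⟨fL1, fL2⟩ := hIT L hLin X hXsub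
    rw [eI, eL, fI2, fL1, one_pow, one_pow]
    ring
  rw [e_left, e_right]


end TutteActivities
end
end

section
/- Let (G,σ,h) be a rooted combinatorial map of a connected graph G. For any spanning tree T, the motion operator t (defined by t(i)=σ(i) if the edge of half-edge i is not in T, and t(i)=σ∘α(i) if it is in T) generates a tour visiting every half-edge of G exactly once before returning to h. -/
noncomputable section
attribute [local instance] Classical.propDecidable

namespace TutteActivities

open Finset

variable {V ε : Type*} [Fintype V] [DecidableEq V] [Fintype ε] [DecidableEq ε]

/- A multigraph on vertex set `V` is given by its edge-endpoint map
`ends : ε → V × V`; the ordered pair also serves as a reference orientation. -/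

/-- The ordered endpoints of edge `e` when traversed in direction `b`. -/
def stepPair (ends : ε → V × V) (e : ε) (b : Bool) : V × V :=
  if b then ends e else (ends e).swap

/-- `S` is the edge set of a cycle: a closed walk using pairwise distinct edges. -/
def IsCyc (ends : ε → V × V) (S : Finset ε) : Prop :=
  ∃ (n : ℕ) (f : ℕ → ε) (d : ℕ → Bool), 0 < n ∧ Set.InjOn f (Set.Iio n) ∧
    S = (Finset.range n).image f ∧
    ∀ i < n, (stepPair ends (f i) (d i)).2 = (stepPair ends (f ((i + 1) % n)) (d ((i + 1) % n))).1

/-- The set of edges crossing the vertex subset `X`. -/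
def crossing (ends : ε → V × V) (X : Finset V) : Finset ε :=
  Finset.univ.filter fun e =>
    ((ends e).1 ∈ X ∧ (ends e).2 ∉ X) ∨ ((ends e).1 ∉ X ∧ (ends e).2 ∈ X)

/-- `S` is a (nonempty) cut: the set of edges crossing some vertex subset. -/
def IsCut (ends : ε → V × V) (S : Finset ε) : Prop :=
  S.Nonempty ∧ ∃ X : Finset V, S = crossing ends X

/-- A forest: a set of edges containing no cycle. -/
def Forest (ends : ε → V × V) (S : Finset ε) : Prop :=
  ∀ C ⊆ S, ¬ IsCyc ends C

/-- The (graphic) rank of an edge set `A`: the maximum size of a forest inside `A`. -/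
def grank (ends : ε → V × V) (A : Finset ε) : ℕ :=
  (A.powerset.filter (Forest ends)).sup Finset.card

/-- A maximal spanning forest. -/
def MaxForest (ends : ε → V × V) (F : Finset ε) : Prop :=
  Forest ends F ∧ ∀ F', Forest ends F' → F ⊆ F' → F' = F

/-- Edge `e ∈ F` is internally active: it is the smallest edge (for the labelling `σ`)
of its fundamental cut, the unique cut contained in `(E \ F) ∪ {e}`. -/
def IntAct (ends : ε → V × V) (σ : ε → ℕ) (F : Finset ε) (e : ε) : Prop :=
  e ∈ F ∧ ∃ U, IsCut ends U ∧ U ⊆ insert e (Finset.univ \ F) ∧ e ∈ U ∧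
    ∀ g ∈ U, σ e ≤ σ g

/-- Edge `e ∉ F` is externally active: it is the smallest edge (for the labelling `σ`)
of its fundamental cycle, the unique cycle contained in `F ∪ {e}`. -/
def ExtAct (ends : ε → V × V) (σ : ε → ℕ) (F : Finset ε) (e : ε) : Prop :=
  e ∉ F ∧ ∃ C, IsCyc ends C ∧ C ⊆ insert e F ∧ e ∈ C ∧ ∀ g ∈ C, σ e ≤ σ g

/-- One-step adjacency through an edge of `S`. -/
def Adj (ends : ε → V × V) (S : Finset ε) (u v : V) : Prop :=
  ∃ e ∈ S, ends e = (u, v) ∨ ends e = (v, u)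

/-- Reachability using edges of `S`. -/
def Reach (ends : ε → V × V) (S : Finset ε) : V → V → Prop :=
  Relation.ReflTransGen (Adj ends S)

/-- A spanning tree: a forest connecting every pair of vertices. -/
def SpanningTree (ends : ε → V × V) (T : Finset ε) : Prop :=
  Forest ends T ∧ ∀ u v : V, Reach ends T u v

/-- The ordered endpoints of `e` under the orientation `O` (`O e = true` means that
`e` agrees with the reference orientation given by `ends`). -/
def oEnds (ends : ε → V × V) (O : ε → Bool) (e : ε) : V × V :=
  if O e then ends e else (ends e).swap

/-- `S` is the edge set of a directed cycle of the orientation `O`. -/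
def IsDirCyc (ends : ε → V × V) (O : ε → Bool) (S : Finset ε) : Prop :=
  ∃ (n : ℕ) (f : ℕ → ε), 0 < n ∧ Set.InjOn f (Set.Iio n) ∧
    S = (Finset.range n).image f ∧
    ∀ i < n, (oEnds ends O (f i)).2 = (oEnds ends O (f ((i + 1) % n))).1

/-- `S` is a directed cut of the orientation `O`: a nonempty cut all of whose edges are
oriented from `X` to `Xᶜ`. -/
def IsDirCut (ends : ε → V × V) (O : ε → Bool) (S : Finset ε) : Prop :=
  S.Nonempty ∧ ∃ X : Finset V, S = crossing ends X ∧
    ∀ e ∈ S, (oEnds ends O e).1 ∈ X ∧ (oEnds ends O e).2 ∉ X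

/-- The corank-nullity (Whitney rank) expansion of the Tutte polynomial of the graph,
evaluated at `(x, y)`, with values in a commutative ring. -/
def gTutte {R : Type*} [CommRing R] (ends : ε → V × V) (x y : R) : R :=
  ∑ A ∈ (Finset.univ : Finset ε).powerset,
    (x - 1) ^ (grank ends Finset.univ - grank ends A) * (y - 1) ^ (A.card - grank ends A)

/-- The vertex at which the half-edge `(e, b)` is attached. -/
def hVtx (ends : ε → V × V) (i : ε × Bool) : V :=
  if i.2 then (ends i.1).1 else (ends i.1).2

/-- The involution `α` exchanging the two half-edges of each edge. -/
def hFlip (i : ε × Bool) : ε × Bool := (i.1, !i.2)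

/-- `σp` is a permutation of the half-edges whose orbits are exactly the stars of
half-edges at each vertex. -/
def IsVertexPerm (ends : ε → V × V) (σp : Equiv.Perm (ε × Bool)) : Prop :=
  (∀ i, hVtx ends (σp i) = hVtx ends i) ∧
  ∀ i j, hVtx ends i = hVtx ends j → ∃ k : ℕ, (⇑σp)^[k] i = j

/-- The motion operator of the rooted combinatorial map with respect to the spanning
tree `T`: `t(i) = σ(α(i))` if the edge of `i` is in `T`, and `t(i) = σ(i)` otherwise. -/
def motion (ends : ε → V × V) (σp : Equiv.Perm (ε × Bool)) (T : Finset ε)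
    (i : ε × Bool) : ε × Bool :=
  if i.1 ∈ T then σp (hFlip i) else σp i
section AuxLemmas

variable (ends : ε → V × V)

lemma adj_symm {S : Finset ε} : Symmetric (Adj ends S) := by
  rintro u v ⟨e, he, h | h⟩
  exacts [⟨e, he, Or.inr h⟩, ⟨e, he, Or.inl h⟩]

lemma reach_symm {S : Finset ε} {u v : V} (h : Reach ends S u v) : Reach ends S v u :=
  haveI : Std.Symm (Adj ends S) := ⟨fun _ _ h' => adj_symm ends h'⟩
  Std.Symm.symm (r := Relation.ReflTransGen (Adj ends S)) _ _ h

lemma adj_mono {S S' : Finset ε} (hSS : S ⊆ S') {u v : V} (h : Adj ends S u v) :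
    Adj ends S' u v := by
  obtain ⟨e, he, h⟩ := h; exact ⟨e, hSS he, h⟩

lemma reach_mono {S S' : Finset ε} (hSS : S ⊆ S') {u v : V} (h : Reach ends S u v) :
    Reach ends S' u v :=
  Relation.ReflTransGen.mono (fun _ _ => adj_mono ends hSS) _ _ h

lemma reach_exists_path [Nonempty ε] {S : Finset ε} {v w : V} (h : Reach ends S v w) :
    ∃ (n : ℕ) (vs : ℕ → V) (es : ℕ → ε) (ds : ℕ → Bool),
      vs 0 = v ∧ vs n = w ∧ Set.InjOn vs (Set.Iic n) ∧
      ∀ i < n, es i ∈ S ∧ stepPair ends (es i) (ds i) = (vs i, vs (i+1)) := by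
  induction h with
  | refl =>
      exact ⟨0, fun _ => v, fun _ => Classical.arbitrary ε, fun _ => true, rfl, rfl,
        fun a ha b hb _ => by
          simp only [Set.mem_Iic, Nat.le_zero] at ha hb; omega,
        fun i hi => absurd hi (by omega)⟩
  | @tail b c hvb hbc ih =>
      obtain ⟨n, vs, es, ds, h0, hn, hinj, hstep⟩ := ih
      obtain ⟨e, heS, hor⟩ := hbc
      have hstepbc : ∃ d : Bool, stepPair ends e d = (b, c) := by
        rcases hor with h | h
        · exact ⟨true, by simp [stepPair, h]⟩
        · exact ⟨false, by simp [stepPair, h, Prod.swap]⟩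
      obtain ⟨d, hd⟩ := hstepbc
      by_cases hc : ∃ i ≤ n, vs i = c
      · obtain ⟨i, hi, hvi⟩ := hc
        exact ⟨i, vs, es, ds, h0, hvi,
          hinj.mono (Set.Iic_subset_Iic.mpr hi),
          fun k hk => hstep k (lt_of_lt_of_le hk hi)⟩
      · push_neg at hc
        refine ⟨n + 1, fun k => if k ≤ n then vs k else c,
          fun k => if k = n then e else es k, fun k => if k = n then d else ds k,
          by simp [h0], by simp, ?_, ?_⟩
        · intro a ha b' hb' hab
          simp only [Set.mem_Iic] at ha hb'
          by_cases h1 : a ≤ n <;> by_cases h2 : b' ≤ n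
          · simp only [h1, h2, if_pos] at hab
            exact hinj (Set.mem_Iic.mpr h1) (Set.mem_Iic.mpr h2) hab
          · simp only [h1, h2, if_pos, if_neg] at hab
            exact absurd hab (hc a h1)
          · simp only [h1, h2, if_pos, if_neg] at hab
            exact absurd hab.symm (hc b' h2)
          · omega
        · intro i hi
          rcases Nat.lt_succ_iff_lt_or_eq.mp hi with hi' | rfl
          · have h1 : i ≠ n := by omega
            have h2 : i ≤ n := by omega
            have h3 : i + 1 ≤ n := by omega
            simpa [h1, h2, h3] using hstep i hi'
          · have : ¬ (i + 1 ≤ i) := by omega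
            simp only [if_pos rfl, le_refl, if_pos, this, if_neg]
            exact ⟨heS, by rw [hn]; exact hd⟩

end AuxLemmas
section AuxForest

variable (ends : ε → V × V)

lemma forest_no_loop {T : Finset ε} (hF : Forest ends T) {e : ε} (he : e ∈ T) :
    (ends e).1 ≠ (ends e).2 := by
  intro hl
  refine hF {e} (by simp [he]) ⟨1, fun _ => e, fun _ => true, one_pos, ?_, by simp, ?_⟩
  · intro a ha b hb _
    simp only [Set.mem_Iio, Nat.lt_one_iff] at ha hb; omega
  · intro i hi
    interval_cases i
    simp [stepPair, hl]

lemma forest_not_reach_erase {T : Finset ε} (hF : Forest ends T) {e : ε} (he : e ∈ T) :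
    ¬ Reach ends (T.erase e) (ends e).1 (ends e).2 := by
  intro h
  haveI : Nonempty ε := ⟨e⟩
  obtain ⟨n, vs, es, ds, h0, hn, hinj, hstep⟩ := reach_exists_path ends h
  -- edges of the path are pairwise distinct
  have hesinj : Set.InjOn es (Set.Iio n) := by
    intro i hi j hj hij
    simp only [Set.mem_Iio] at hi hj
    have hstepi := (hstep i hi).2
    have hstepj := (hstep j hj).2
    rw [hij] at hstepi
    have h1 : (vs i, vs (i+1)) = ends (es j) ∨
        (vs i, vs (i+1)) = ((ends (es j)).2, (ends (es j)).1) := by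
      rw [← hstepi]
      rcases Bool.eq_false_or_eq_true (ds i) with hd | hd <;>
        simp [stepPair, hd, Prod.swap]
    have h2 : (vs j, vs (j+1)) = ends (es j) ∨
        (vs j, vs (j+1)) = ((ends (es j)).2, (ends (es j)).1) := by
      rw [← hstepj]
      rcases Bool.eq_false_or_eq_true (ds j) with hd | hd <;>
        simp [stepPair, hd, Prod.swap]
    simp only [Prod.ext_iff] at h1 h2
    have hii : i ∈ Set.Iic n := Set.mem_Iic.mpr (by omega)
    have hji : j ∈ Set.Iic n := Set.mem_Iic.mpr (by omega)
    have hii1 : i + 1 ∈ Set.Iic n := Set.mem_Iic.mpr (by omega)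
    have hji1 : j + 1 ∈ Set.Iic n := Set.mem_Iic.mpr (by omega)
    rcases h1 with ⟨ha1, ha2⟩ | ⟨ha1, ha2⟩ <;> rcases h2 with ⟨hb1, hb2⟩ | ⟨hb1, hb2⟩
    · exact hinj hii hji (ha1.trans hb1.symm)
    · have e1 : i = j + 1 := hinj hii hji1 (ha1.trans hb2.symm)
      have e2 : i + 1 = j := hinj hii1 hji (ha2.trans hb1.symm)
      omega
    · have e1 : i = j + 1 := hinj hii hji1 (ha1.trans hb2.symm)
      have e2 : i + 1 = j := hinj hii1 hji (ha2.trans hb1.symm)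
      omega
    · exact hinj hii hji (ha1.trans hb1.symm)
  -- build a cycle from the path plus e
  set f : ℕ → ε := fun k => if k < n then es k else e with hf
  set d : ℕ → Bool := fun k => if k < n then ds k else false with hdd
  have hfes : ∀ k < n, f k ∈ T.erase e := fun k hk => by
    simp only [hf, if_pos hk]; exact (hstep k hk).1
  refine hF ((Finset.range (n+1)).image f) ?_ ⟨n+1, f, d, Nat.succ_pos n, ?_, rfl, ?_⟩
  · intro x hx
    simp only [Finset.mem_image, Finset.mem_range] at hx
    obtain ⟨k, hk, rfl⟩ := hx
    by_cases hkn : k < n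
    · exact Finset.mem_of_mem_erase (hfes k hkn)
    · simp only [hf, if_neg hkn]; exact he
  · intro a ha b hb hab
    simp only [Set.mem_Iio] at ha hb
    by_cases h1 : a < n <;> by_cases h2 : b < n
    · simp only [hf, if_pos h1, if_pos h2] at hab
      exact hesinj (Set.mem_Iio.mpr h1) (Set.mem_Iio.mpr h2) hab
    · exfalso
      simp only [hf, if_pos h1, if_neg h2] at hab
      exact Finset.ne_of_mem_erase (hstep a h1).1 hab
    · exfalso
      simp only [hf, if_neg h1, if_pos h2] at hab
      exact Finset.ne_of_mem_erase (hstep b h2).1 hab.symm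
    · omega
  · intro i hi
    have hsp : ∀ k, k < n → stepPair ends (f k) (d k) = (vs k, vs (k+1)) := by
      intro k hk
      simp only [hf, hdd, if_pos hk]
      exact (hstep k hk).2
    have hspn : stepPair ends (f n) (d n) = (vs n, vs 0) := by
      simp only [hf, hdd, lt_irrefl, if_neg (lt_irrefl n)]
      simp [stepPair, Prod.swap, hn, h0]
    rcases Nat.lt_succ_iff_lt_or_eq.mp hi with hi' | hieq
    · rw [hsp i hi']
      have hmod : (i + 1) % (n + 1) = i + 1 := Nat.mod_eq_of_lt (by omega)
      rw [hmod]
      rcases Nat.lt_or_ge (i+1) n with h2 | h2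
      · rw [hsp (i+1) h2]
      · have : i + 1 = n := by omega
        rw [this, hspn]
    · rw [hieq, Nat.mod_self, hspn]
      rcases Nat.lt_or_ge 0 n with h2 | h2
      · rw [hsp 0 h2]
      · have hn0 : n = 0 := by omega
        subst hn0
        rw [hspn]

end AuxForest
section AuxComp

variable (ends : ε → V × V)

lemma ends_eq_hVtx (x : ε × Bool) :
    ends x.1 = (hVtx ends x, hVtx ends (hFlip x)) ∨
    ends x.1 = (hVtx ends (hFlip x), hVtx ends x) := by
  rcases Bool.eq_false_or_eq_true x.2 with hb | hb
  · left
    simp [hVtx, hFlip, hb]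
  · right
    simp [hVtx, hFlip, hb]

lemma adj_of_halfedge {S : Finset ε} {x : ε × Bool} (hx : x.1 ∈ S) :
    Adj ends S (hVtx ends x) (hVtx ends (hFlip x)) := by
  rcases ends_eq_hVtx ends x with h | h
  · exact ⟨x.1, hx, Or.inl h⟩
  · exact ⟨x.1, hx, Or.inr h⟩

lemma forest_not_reach_halfedge {T : Finset ε} (hF : Forest ends T) {x : ε × Bool}
    (hx : x.1 ∈ T) :
    ¬ Reach ends (T.erase x.1) (hVtx ends (hFlip x)) (hVtx ends x) := by
  intro hr
  have := forest_not_reach_erase ends hF hx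
  rcases ends_eq_hVtx ends x with h | h
  · rw [h] at this
    exact this (reach_symm ends hr)
  · rw [h] at this
    exact this hr

lemma reach_avoid {S : Finset ε} {e : ε} {a b : V}
    (hab : Reach ends S a b)
    (h1 : ¬ Reach ends S a (ends e).1) (h2 : ¬ Reach ends S a (ends e).2) :
    Reach ends (S.erase e) a b := by
  induction hab with
  | refl => exact Relation.ReflTransGen.refl
  | @tail b' c hab' hbc ih =>
      obtain ⟨e', he', hor⟩ := hbc
      have hne : e' ≠ e := by
        rintro rfl
        rcases hor with h | h
        · exact h1 (hab'.trans (by rw [h]))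
        · exact h2 (hab'.trans (by rw [h]))
      exact ih.tail ⟨e', Finset.mem_erase.mpr ⟨hne, he'⟩, hor⟩

/-- The component of the far endpoint of a tree half-edge, after deleting its edge. -/
def compAcross (T : Finset ε) (x : ε × Bool) : Finset V :=
  Finset.univ.filter fun y => Reach ends (T.erase x.1) (hVtx ends (hFlip x)) y

lemma comp_card_lt {T : Finset ε} (hF : Forest ends T)
    {j x : ε × Bool} (hjT : j.1 ∈ T) (hxT : x.1 ∈ T) (hne : x.1 ≠ j.1)
    (hvx : hVtx ends x = hVtx ends (hFlip j)) :
    (compAcross ends T x).card < (compAcross ends T j).card := by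
  have hju : j.1 ∈ T.erase x.1 := Finset.mem_erase.mpr ⟨fun h => hne h.symm, hjT⟩
  have hxu : x.1 ∈ T.erase j.1 := Finset.mem_erase.mpr ⟨hne, hxT⟩
  -- u = far endpoint of x, w = vertex of x = far endpoint of j, v = vertex of j
  have hnw : ¬ Reach ends (T.erase x.1) (hVtx ends (hFlip x)) (hVtx ends (hFlip j)) := by
    rw [← hvx]
    exact forest_not_reach_halfedge ends hF hxT
  have hnv : ¬ Reach ends (T.erase x.1) (hVtx ends (hFlip x)) (hVtx ends j) := by
    intro hr
    exact hnw (hr.tail (by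
      have := adj_of_halfedge ends (S := T.erase x.1) (x := j) hju
      exact this))
  have hsub : compAcross ends T x ⊆ compAcross ends T j := by
    intro y hy
    simp only [compAcross, Finset.mem_filter, Finset.mem_univ, true_and] at hy ⊢
    have h1 : ¬ Reach ends (T.erase x.1) (hVtx ends (hFlip x)) (ends j.1).1 := by
      rcases ends_eq_hVtx ends j with h | h <;> rw [h] <;> assumption
    have h2 : ¬ Reach ends (T.erase x.1) (hVtx ends (hFlip x)) (ends j.1).2 := by
      rcases ends_eq_hVtx ends j with h | h <;> rw [h] <;> assumption
    have hy' : Reach ends ((T.erase x.1).erase j.1) (hVtx ends (hFlip x)) y :=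
      reach_avoid ends hy h1 h2
    have hy'' : Reach ends (T.erase j.1) (hVtx ends (hFlip x)) y :=
      reach_mono ends (Finset.erase_subset_erase j.1 (Finset.erase_subset x.1 T)) hy'
    have hwu : Reach ends (T.erase j.1) (hVtx ends (hFlip j)) (hVtx ends (hFlip x)) := by
      rw [← hvx]
      exact Relation.ReflTransGen.single (adj_of_halfedge ends hxu)
    exact hwu.trans hy''
  have hwin : hVtx ends (hFlip j) ∈ compAcross ends T j := by
    simp only [compAcross, Finset.mem_filter, Finset.mem_univ, true_and]
    exact Relation.ReflTransGen.refl
  have hwout : hVtx ends (hFlip j) ∉ compAcross ends T x := by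
    simp only [compAcross, Finset.mem_filter, Finset.mem_univ, true_and]
    exact hnw
  exact Finset.card_lt_card (Finset.ssubset_iff_of_subset hsub |>.mpr
    ⟨hVtx ends (hFlip j), hwin, hwout⟩)

end AuxComp
section AuxExcursion

variable (ends : ε → V × V) (σp : Equiv.Perm (ε × Bool))

lemma hFlip_hFlip (x : ε × Bool) : hFlip (hFlip x) = x := by
  simp [hFlip]

lemma hVtx_iterate (hσp : IsVertexPerm ends σp) (k : ℕ) (x : ε × Bool) :
    hVtx ends ((⇑σp)^[k] x) = hVtx ends x := by
  induction k with
  | zero => rfl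
  | succ k ih => rw [Function.iterate_succ_apply', hσp.1, ih]

lemma hVtx_flip_ne {T : Finset ε} (hF : Forest ends T) {j : ε × Bool} (hj : j.1 ∈ T) :
    hVtx ends j ≠ hVtx ends (hFlip j) := by
  have hl := forest_no_loop ends hF hj
  rcases ends_eq_hVtx ends j with h | h
  · rw [h] at hl
    exact hl
  · rw [h] at hl
    exact hl.symm

lemma motion_of_mem {T : Finset ε} {i : ε × Bool} (hi : i.1 ∈ T) :
    motion ends σp T i = σp (hFlip i) := if_pos hi

lemma motion_of_not_mem {T : Finset ε} {i : ε × Bool} (hi : i.1 ∉ T) :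
    motion ends σp T i = σp i := if_neg hi

lemma motion_flip {T : Finset ε} {x : ε × Bool} (hx : x.1 ∈ T) :
    motion ends σp T (hFlip x) = σp x := by
  rw [motion_of_mem ends σp (show (hFlip x).1 ∈ T from hx), hFlip_hFlip]

lemma excursion (hσp : IsVertexPerm ends σp) {T : Finset ε} (hF : Forest ends T) :
    ∀ (N : ℕ) (j : ε × Bool), (compAcross ends T j).card < N → j.1 ∈ T →
      ∃ m, 0 < m ∧ (motion ends σp T)^[m] j = hFlip j := by
  intro N
  induction N with
  | zero => exact fun j h _ => absurd h (Nat.not_lt_zero _)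
  | succ N IH =>
    intro j hcard hjT
    have htj : motion ends σp T j = σp (hFlip j) := motion_of_mem ends σp hjT
    have hvt : hVtx ends (motion ends σp T j) = hVtx ends (hFlip j) := by
      rw [htj, hσp.1]
    have hex : ∃ k, (⇑σp)^[k] (motion ends σp T j) = hFlip j := hσp.2 _ _ hvt
    have hkspec := Nat.find_spec hex
    have hkmin : ∀ p < Nat.find hex, (⇑σp)^[p] (motion ends σp T j) ≠ hFlip j :=
      fun p hp => Nat.find_min hex hp
    have key : ∀ p ≤ Nat.find hex, ∃ m, 0 < m ∧
        (motion ends σp T)^[m] j = (⇑σp)^[p] (motion ends σp T j) := by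
      intro p
      induction p with
      | zero => exact fun _ => ⟨1, one_pos, rfl⟩
      | succ p ihp =>
        intro hpk
        obtain ⟨m, hm, hmx⟩ := ihp (Nat.le_of_succ_le hpk)
        set x := (⇑σp)^[p] (motion ends σp T j) with hxdef
        have hvx : hVtx ends x = hVtx ends (hFlip j) := by
          rw [hxdef, hVtx_iterate ends σp hσp, hvt]
        by_cases hxT : x.1 ∈ T
        · have hxj : x ≠ j := by
            intro hxj
            exact hVtx_flip_ne ends hF hjT (hxj ▸ hvx)
          have hxfj : x ≠ hFlip j := hkmin p (Nat.lt_of_succ_le hpk)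
          have hx1 : x.1 ≠ j.1 := by
            intro h1
            have hb : x.2 = j.2 ∨ x.2 = !j.2 := by
              cases x.2 <;> cases j.2 <;> simp
            rcases hb with hb | hb
            · exact hxj (Prod.ext h1 hb)
            · exact hxfj (Prod.ext h1 hb)
          obtain ⟨m', hm', hmx'⟩ := IH x (by
              have := comp_card_lt ends hF hjT hxT hx1 hvx
              omega) hxT
          refine ⟨m + m' + 1, by omega, ?_⟩
          have e1 : (motion ends σp T)^[m + m' + 1] j =
              motion ends σp T ((motion ends σp T)^[m'] ((motion ends σp T)^[m] j)) := by
            rw [show m + m' + 1 = 1 + (m' + m) by ring, Function.iterate_add_apply,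
              Function.iterate_add_apply, Function.iterate_one]
          rw [e1, hmx, hmx', motion_flip ends σp hxT, Function.iterate_succ_apply', ← hxdef]
        · refine ⟨m + 1, by omega, ?_⟩
          rw [Function.iterate_succ_apply', hmx, Function.iterate_succ_apply', ← hxdef]
          exact motion_of_not_mem ends σp hxT
    obtain ⟨m, hm, hmx⟩ := key (Nat.find hex) le_rfl
    exact ⟨m, hm, by rw [hmx, hkspec]⟩

end AuxExcursion
/-- For a rooted combinatorial map of a connected graph and a spanning tree `T`, the
motion operator generates a tour that visits every half-edge exactly once before
returning to the root half-edge `h`. -/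
theorem motion_tour_visits_all_halfEdges
    (ends : ε → V × V) (σp : Equiv.Perm (ε × Bool)) (hσp : IsVertexPerm ends σp)
    (hconn : ∀ u v : V, Reach ends Finset.univ u v)
    (T : Finset ε) (hT : SpanningTree ends T) (h : ε × Bool) :
    (∀ j : ε × Bool, ∃ k < Fintype.card (ε × Bool), (motion ends σp T)^[k] h = j) ∧
    (motion ends σp T)^[Fintype.card (ε × Bool)] h = h := by
  classical
  have hF := hT.1
  have hexc : ∀ j : ε × Bool, j.1 ∈ T →
      ∃ m, 0 < m ∧ (motion ends σp T)^[m] j = hFlip j :=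
    fun j hj => excursion ends σp hσp hF ((compAcross ends T j).card + 1) j
      (Nat.lt_succ_self _) hj
  -- the forward orbit of h
  set O : (ε × Bool) → Prop := fun j => ∃ m, (motion ends σp T)^[m] h = j with hO
  have hOh : O h := ⟨0, rfl⟩
  have hOt : ∀ j, O j → O (motion ends σp T j) := by
    rintro j ⟨m, hm⟩
    exact ⟨m + 1, by rw [Function.iterate_succ_apply', hm]⟩
  have hOiter : ∀ j, O j → ∀ m, O ((motion ends σp T)^[m] j) := by
    intro j hj m
    induction m with
    | zero => exact hj
    | succ m ih => rw [Function.iterate_succ_apply']; exact hOt _ ih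
  have hOflip : ∀ j, O j → j.1 ∈ T → O (hFlip j) := by
    intro j hj hjT
    obtain ⟨m, _, hm⟩ := hexc j hjT
    exact hm ▸ hOiter j hj m
  have hOsig : ∀ j, O j → O (σp j) := by
    intro j hj
    by_cases hjT : j.1 ∈ T
    · have h1 := hOt _ (hOflip j hj hjT)
      rwa [motion_flip ends σp hjT] at h1
    · have h1 := hOt j hj
      rwa [motion_of_not_mem ends σp hjT] at h1
  have hOstar : ∀ j, O j → ∀ i, hVtx ends i = hVtx ends j → O i := by
    intro j hj i hvi
    obtain ⟨k, hk⟩ := hσp.2 j i hvi.symm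
    have hall : ∀ k, O ((⇑σp)^[k] j) := by
      intro k
      induction k with
      | zero => exact hj
      | succ k ih => rw [Function.iterate_succ_apply']; exact hOsig _ ih
    rw [← hk]
    exact hall k
  have hprop : ∀ v, Reach ends T (hVtx ends h) v → ∀ i, hVtx ends i = v → O i := by
    intro v hr
    induction hr with
    | refl => exact fun i hi => hOstar h hOh i hi
    | @tail b c hb hbc ih =>
      obtain ⟨e, heT, hor⟩ := hbc
      have hhalf : ∃ x : ε × Bool, x.1 = e ∧ hVtx ends x = b ∧ hVtx ends (hFlip x) = c := by
        rcases hor with he' | he'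
        · exact ⟨(e, true), rfl, by simp [hVtx, he'], by simp [hVtx, hFlip, he']⟩
        · exact ⟨(e, false), rfl, by simp [hVtx, he'], by simp [hVtx, hFlip, he']⟩
      obtain ⟨x, hxe, hxb, hxc⟩ := hhalf
      have h1 : O x := ih x hxb
      have h2 : O (hFlip x) := hOflip x h1 (hxe ▸ heT)
      intro i hi
      exact hOstar _ h2 i (by rw [hi, hxc])
  have hall : ∀ j, O j := fun j => hprop (hVtx ends j) (hT.2 _ _) j rfl
  -- the motion operator is injective
  have htinj : Function.Injective (motion ends σp T) := by
    intro a b hab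
    have hab' : (if a.1 ∈ T then hFlip a else a) = (if b.1 ∈ T then hFlip b else b) := by
      apply σp.injective
      simpa [motion, apply_ite ⇑σp] using hab
    have hg : ∀ c : ε × Bool,
        (if (if c.1 ∈ T then hFlip c else c).1 ∈ T then hFlip (if c.1 ∈ T then hFlip c else c)
          else (if c.1 ∈ T then hFlip c else c)) = c := by
      intro c
      by_cases hc : c.1 ∈ T
      · simp [hc, hFlip]
      · simp [hc]
    calc a = _ := (hg a).symm
    _ = _ := by rw [hab']
    _ = b := hg b
  -- pigeonhole: a positive period exists
  have hper : ∃ p, 0 < p ∧ (motion ends σp T)^[p] h = h := by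
    set N := Fintype.card (ε × Bool)
    have hnoinj : ¬ Function.Injective (fun k : Fin (N + 1) => (motion ends σp T)^[k.1] h) := by
      intro hinj
      have := Fintype.card_le_of_injective _ hinj
      simp [N] at this
    rw [Function.not_injective_iff] at hnoinj
    obtain ⟨a, b, hab, hne⟩ := hnoinj
    rcases Nat.lt_or_ge a.1 b.1 with hlt | hge
    · refine ⟨b.1 - a.1, by omega, ?_⟩
      have : (motion ends σp T)^[a.1] ((motion ends σp T)^[b.1 - a.1] h) =
          (motion ends σp T)^[a.1] h := by
        rw [← Function.iterate_add_apply]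
        rw [show a.1 + (b.1 - a.1) = b.1 by omega]
        exact hab.symm
      exact Function.Injective.iterate htinj a.1 this
    · have hlt : b.1 < a.1 := by
        rcases Nat.lt_or_ge b.1 a.1 with h' | h'
        · exact h'
        · exact absurd (Fin.ext (by omega)) hne
      refine ⟨a.1 - b.1, by omega, ?_⟩
      have : (motion ends σp T)^[b.1] ((motion ends σp T)^[a.1 - b.1] h) =
          (motion ends σp T)^[b.1] h := by
        rw [← Function.iterate_add_apply]
        rw [show b.1 + (a.1 - b.1) = a.1 by omega]
        exact hab
      exact Function.Injective.iterate htinj b.1 this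
  set p := Nat.find hper with hpdef
  obtain ⟨hppos, hph⟩ := Nat.find_spec hper
  have hmul : ∀ q, (motion ends σp T)^[p * q] h = h := by
    intro q
    induction q with
    | zero => simp
    | succ q ih =>
      rw [Nat.mul_succ, Function.iterate_add_apply, hph, ih]
  have hmod : ∀ k, (motion ends σp T)^[k] h = (motion ends σp T)^[k % p] h := by
    intro k
    conv_lhs => rw [← Nat.div_add_mod k p]
    rw [Nat.add_comm, Function.iterate_add_apply, hmul]
  have hfininj : Function.Injective (fun k : Fin p => (motion ends σp T)^[k.1] h) := by
    intro a b hab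
    by_contra hne
    have hne' : a.1 ≠ b.1 := fun hc => hne (Fin.ext hc)
    rcases Nat.lt_or_ge a.1 b.1 with hlt | hge
    · have heq : (motion ends σp T)^[b.1 - a.1] h = h := by
        apply Function.Injective.iterate htinj a.1
        rw [← Function.iterate_add_apply, show a.1 + (b.1 - a.1) = b.1 by omega]
        exact hab.symm
      exact Nat.find_min hper (show b.1 - a.1 < p by omega) ⟨by omega, heq⟩
    · have hlt : b.1 < a.1 := by omega
      have heq : (motion ends σp T)^[a.1 - b.1] h = h := by
        apply Function.Injective.iterate htinj b.1
        rw [← Function.iterate_add_apply, show b.1 + (a.1 - b.1) = a.1 by omega]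
        exact hab
      exact Nat.find_min hper (show a.1 - b.1 < p by omega) ⟨by omega, heq⟩
  have hfinsurj : Function.Surjective (fun k : Fin p => (motion ends σp T)^[k.1] h) := by
    intro j
    obtain ⟨m, hm⟩ := hall j
    refine ⟨⟨m % p, Nat.mod_lt _ hppos⟩, ?_⟩
    show (motion ends σp T)^[m % p] h = j
    rw [← hmod]
    exact hm
  have hple : p ≤ Fintype.card (ε × Bool) := by
    have := Fintype.card_le_of_injective _ hfininj
    simpa using this
  have hpge : Fintype.card (ε × Bool) ≤ p := by
    have := Fintype.card_le_of_surjective _ hfinsurj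
    simpa using this
  have hpN : p = Fintype.card (ε × Bool) := le_antisymm hple hpge
  constructor
  · intro j
    obtain ⟨m, hm⟩ := hall j
    exact ⟨m % p, by rw [← hpN]; exact Nat.mod_lt _ hppos, by rw [← hmod]; exact hm⟩
  · rw [← hpN]
    exact hph

end TutteActivities
end
end

section
/- In any orientation O of a graph G, every edge belongs to a directed cut or to a directed cycle, but not both. Consequently, for each orientation, the sets of cut-active and cycle-active edges are disjoint. -/
noncomputable section
attribute [local instance] Classical.propDecidable

namespace TutteActivities

open Finset

variable {V ε : Type*} [Fintype V] [DecidableEq V] [Fintype ε] [DecidableEq ε]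

/-! ### Auxiliary machinery for the proof -/

section Aux

variable (ends : ε → V × V) (O : ε → Bool)

/-- Directed adjacency under orientation `O`. -/
def DRel (a b : V) : Prop := ∃ e, oEnds ends O e = (a, b)

/-- `L` is a directed walk starting at `a`. -/
def DWalk : V → List ε → Prop
  | _, [] => True
  | a, e :: L => (oEnds ends O e).1 = a ∧ DWalk (oEnds ends O e).2 L

/-- Final vertex of a directed walk starting at `a`. -/
def endAt : V → List ε → V
  | a, [] => a
  | _, e :: L => endAt (oEnds ends O e).2 L

variable {ends O}

lemma endAt_append (a : V) (L1 L2 : List ε) :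
    endAt ends O a (L1 ++ L2) = endAt ends O (endAt ends O a L1) L2 := by
  induction L1 generalizing a with
  | nil => rfl
  | cons e L ih =>
    show endAt ends O (oEnds ends O e).2 (L ++ L2) = _
    rw [ih]
    rfl

lemma dwalk_append {a : V} {L1 L2 : List ε} (h1 : DWalk ends O a L1)
    (h2 : DWalk ends O (endAt ends O a L1) L2) : DWalk ends O a (L1 ++ L2) := by
  induction L1 generalizing a with
  | nil => exact h2
  | cons e L ih => exact ⟨h1.1, ih h1.2 h2⟩

lemma dwalk_split {a : V} {L1 L2 : List ε} (h : DWalk ends O a (L1 ++ L2)) :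
    DWalk ends O a L1 ∧ DWalk ends O (endAt ends O a L1) L2 := by
  induction L1 generalizing a with
  | nil => exact ⟨trivial, h⟩
  | cons e L ih =>
    obtain ⟨h1, h2⟩ := h
    obtain ⟨w1, w2⟩ := ih h2
    exact ⟨⟨h1, w1⟩, w2⟩

lemma dwalk_getD {a : V} {L : List ε} (h : DWalk ends O a L) (d : ε) :
    ∀ i < L.length, oEnds ends O (L.getD i d) =
      (endAt ends O a (L.take i), endAt ends O a (L.take (i + 1))) := by
  induction L generalizing a with
  | nil => simp
  | cons e L ih =>
    intro i hi
    cases i with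
    | zero =>
      have : (oEnds ends O e).1 = a := h.1
      simp only [List.getD, List.take_zero, List.take_succ_cons, List.take_zero]
      exact Prod.ext this rfl
    | succ i =>
      have := ih h.2 i (by simpa using hi)
      simpa only [List.getD, List.take_succ_cons, endAt, List.getElem?_cons_succ] using this

lemma reach_dwalk {v w : V} (h : Relation.ReflTransGen (DRel ends O) v w) :
    ∃ L, DWalk ends O v L ∧ endAt ends O v L = w := by
  induction h with
  | refl => exact ⟨[], trivial, rfl⟩
  | @tail b c _ hbc ih =>
    obtain ⟨L, hw, he⟩ := ih
    obtain ⟨e, hev⟩ := hbc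
    refine ⟨L ++ [e], dwalk_append hw ?_, ?_⟩
    · rw [he]
      exact ⟨by rw [hev], trivial⟩
    · rw [endAt_append, he]
      simp [endAt, hev]

/-- From any walk we can extract a walk with the same endpoints whose vertex
sequence is injective. -/
lemma exists_simple_dwalk {v : V} :
    ∀ (N : ℕ) (L : List ε), L.length ≤ N → DWalk ends O v L →
    ∃ M, DWalk ends O v M ∧ endAt ends O v M = endAt ends O v L ∧
      ∀ i j, i < j → j ≤ M.length →
        endAt ends O v (M.take i) ≠ endAt ends O v (M.take j) := by
  intro N
  induction N with
  | zero =>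
    intro L hL _
    have : L = [] := List.length_eq_zero_iff.mp (Nat.le_zero.mp hL)
    subst this
    exact ⟨[], trivial, rfl, fun i j hij hj => by omega⟩
  | succ N ih =>
    intro L hL hw
    by_cases hinj : ∀ i j, i < j → j ≤ L.length →
        endAt ends O v (L.take i) ≠ endAt ends O v (L.take j)
    · exact ⟨L, hw, rfl, hinj⟩
    · push_neg at hinj
      obtain ⟨i, j, hij, hjle, heq⟩ := hinj
      -- splice out the loop between positions i and j
      have hdecomp : L = L.take j ++ L.drop j := (List.take_append_drop j L).symm
      have hw' : DWalk ends O v (L.take j ++ L.drop j) := by rw [← hdecomp]; exact hw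
      obtain ⟨hwtj, hwd⟩ := dwalk_split hw'
      have htj : L.take j = L.take i ++ (L.take j).drop i := by
        conv_lhs => rw [← List.take_append_drop i (L.take j)]
        rw [List.take_take, min_eq_left hij.le]
      have hwtj' : DWalk ends O v (L.take i ++ (L.take j).drop i) := by
        rw [← htj]; exact hwtj
      obtain ⟨hwti, _⟩ := dwalk_split hwtj'
      set M0 := L.take i ++ L.drop j with hM0
      have hwM0 : DWalk ends O v M0 := by
        refine dwalk_append hwti ?_
        rw [heq]; exact hwd
      have hendM0 : endAt ends O v M0 = endAt ends O v L := by
        rw [hM0, endAt_append, heq, ← endAt_append, ← hdecomp]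
      have hlen : M0.length < L.length := by
        simp only [hM0, List.length_append, List.length_take, List.length_drop]
        omega
      obtain ⟨M, h1, h2, h3⟩ := ih M0 (by omega) hwM0
      exact ⟨M, h1, h2.trans hendM0, h3⟩

/-- Membership in a crossing set in terms of the oriented ends. -/
lemma mem_crossing_iff {X : Finset V} {g : ε} :
    g ∈ crossing ends X ↔
      (((oEnds ends O g).1 ∈ X ∧ (oEnds ends O g).2 ∉ X) ∨
        ((oEnds ends O g).1 ∉ X ∧ (oEnds ends O g).2 ∈ X)) := by
  unfold crossing oEnds
  by_cases h : O g <;> simp [h] <;> tauto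

/-- A closed directed walk with pairwise distinct edges gives a directed cycle. -/
lemma closed_dwalk_dirCyc {a : V} {g : List ε} (d : ε) (hne : 0 < g.length)
    (hw : DWalk ends O a g) (hc : endAt ends O a g = a) (hnd : g.Nodup) :
    IsDirCyc ends O g.toFinset := by
  refine ⟨g.length, fun i => g.getD i d, hne, ?_, ?_, ?_⟩
  · intro i hi j hj hij
    simp only [Set.mem_Iio] at hi hj
    have hij' : g.getD i d = g.getD j d := hij
    rw [List.getD_eq_getElem _ _ hi, List.getD_eq_getElem _ _ hj] at hij'
    have hgg : g.get ⟨i, hi⟩ = g.get ⟨j, hj⟩ := by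
      simpa [List.get_eq_getElem] using hij'
    exact congrArg Fin.val (List.nodup_iff_injective_get.mp hnd hgg)
  · ext x
    simp only [Finset.mem_image, Finset.mem_range, List.mem_toFinset,
      List.mem_iff_getElem]
    constructor
    · rintro ⟨i, hi, rfl⟩
      exact ⟨i, hi, List.getD_eq_getElem _ _ hi⟩
    · rintro ⟨i, hi, rfl⟩
      exact ⟨i, hi, (List.getD_eq_getElem _ _ hi).symm⟩
  · intro i hi
    have P := dwalk_getD hw d
    rcases Nat.lt_or_ge (i + 1) g.length with h1 | h1
    · rw [Nat.mod_eq_of_lt h1, P i hi, P (i + 1) h1]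
    · have hin : i + 1 = g.length := by omega
      have : (i + 1) % g.length = 0 := by rw [hin, Nat.mod_self]
      rw [this, P i hi, P 0 hne]
      simp only [List.take_zero]
      show endAt ends O a (g.take (i + 1)) = endAt ends O a []
      rw [hin, List.take_length]
      exact hc

/-- Every edge lies in a directed cut or in a directed cycle. -/
lemma dirCut_or_dirCyc (ends : ε → V × V) (O : ε → Bool) (e : ε) :
    (∃ S, IsDirCut ends O S ∧ e ∈ S) ∨ (∃ S, IsDirCyc ends O S ∧ e ∈ S) := by
  set u := (oEnds ends O e).1 with hu
  set v := (oEnds ends O e).2 with hv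
  by_cases hr : Relation.ReflTransGen (DRel ends O) v u
  · -- e is in a directed cycle
    right
    obtain ⟨L0, hw0, he0⟩ := reach_dwalk hr
    obtain ⟨M, hwM, heM, hinj⟩ := exists_simple_dwalk L0.length L0 le_rfl hw0
    rw [he0] at heM
    set g := e :: M with hg
    have hwg : DWalk ends O u g := by
      refine ⟨hu.symm, ?_⟩
      rw [← hv]; exact hwM
    have hcg : endAt ends O u g = u := by
      show endAt ends O (oEnds ends O e).2 M = u
      rw [← hv]; exact heM
    have PM := dwalk_getD hwM e
    have hP0 : endAt ends O v (M.take 0) = v := rfl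
    have heM' : e ∉ M := by
      intro hem
      obtain ⟨i, hi, hie⟩ := List.mem_iff_getElem.mp hem
      have := PM i hi
      rw [List.getD_eq_getElem _ _ hi, hie] at this
      have h2 : endAt ends O v (M.take (i + 1)) = v :=
        (congrArg Prod.snd this).symm.trans hv.symm
      exact hinj 0 (i + 1) (Nat.succ_pos i) hi (by rw [hP0, h2])
    have hMnd : M.Nodup := by
      rw [List.nodup_iff_injective_get]
      intro ⟨i, hi⟩ ⟨j, hj⟩ hij
      have hgg : M[i] = M[j] := by simpa [List.get_eq_getElem] using hij
      have h1 := PM i hi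
      have h2 := PM j hj
      rw [List.getD_eq_getElem _ _ hi] at h1
      rw [List.getD_eq_getElem _ _ hj] at h2
      rw [hgg, h2] at h1
      have hsnd : endAt ends O v (M.take (j + 1)) = endAt ends O v (M.take (i + 1)) :=
        congrArg Prod.snd h1
      simp only [Fin.mk.injEq]
      by_contra hne
      rcases Nat.lt_or_ge i j with hlt | hge
      · exact hinj (i + 1) (j + 1) (by omega) hj hsnd.symm
      · exact hinj (j + 1) (i + 1) (by omega) hi hsnd
    have hgnd : g.Nodup := List.nodup_cons.mpr ⟨heM', hMnd⟩
    exact ⟨g.toFinset, closed_dwalk_dirCyc e (by simp [hg]) hwg hcg hgnd,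
      by simp [hg]⟩
  · -- e is in a directed cut
    left
    set X : Finset V := Finset.univ.filter
      (fun w => ¬ Relation.ReflTransGen (DRel ends O) v w) with hX
    have hmemX : ∀ w : V, w ∈ X ↔ ¬ Relation.ReflTransGen (DRel ends O) v w := by
      intro w; simp [hX]
    have huX : u ∈ X := (hmemX u).mpr hr
    have hvX : v ∉ X := fun h => (hmemX v).mp h Relation.ReflTransGen.refl
    have hdirAll : ∀ g ∈ crossing ends X,
        (oEnds ends O g).1 ∈ X ∧ (oEnds ends O g).2 ∉ X := by
      intro g hgmem
      rcases (mem_crossing_iff (O := O)).mp hgmem with h | h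
      · exact h
      · exfalso
        have hr1 : Relation.ReflTransGen (DRel ends O) v (oEnds ends O g).1 := by
          by_contra hc
          exact h.1 ((hmemX _).mpr hc)
        have hr2 : Relation.ReflTransGen (DRel ends O) v (oEnds ends O g).2 :=
          hr1.tail ⟨g, Prod.mk.eta.symm⟩
        exact (hmemX _).mp h.2 hr2
    have heS : e ∈ crossing ends X :=
      (mem_crossing_iff (O := O)).mpr (Or.inl ⟨huX, hvX⟩)
    exact ⟨crossing ends X, ⟨⟨e, heS⟩, X, rfl, hdirAll⟩, heS⟩

/-- No edge lies both in a directed cut and in a directed cycle. -/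
lemma not_dirCut_and_dirCyc (ends : ε → V × V) (O : ε → Bool) (e : ε) :
    ¬ ((∃ S, IsDirCut ends O S ∧ e ∈ S) ∧ (∃ S, IsDirCyc ends O S ∧ e ∈ S)) := by
  rintro ⟨⟨S, ⟨-, X, hSX, hdir⟩, heS⟩, ⟨C, ⟨n, f, hn, -, hC, hchain⟩, heC⟩⟩
  -- locate e on the cycle
  rw [hC] at heC
  obtain ⟨i0, hi0, hfi0⟩ := Finset.mem_image.mp heC
  rw [Finset.mem_range] at hi0
  set h : ℕ → V := fun i => (oEnds ends O (f (i % n))).1 with hh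
  have hstep : ∀ i, (oEnds ends O (f (i % n))).2 = h (i + 1) := by
    intro i
    have := hchain (i % n) (Nat.mod_lt _ hn)
    rw [this, hh]
    simp only []
    rw [Nat.mod_add_mod]
  have hper : ∀ i, h (i + n) = h i := by
    intro i; simp [hh, Nat.add_mod_right]
  have hi0X : h i0 ∈ X := by
    have := (hdir e heS).1
    rw [hh]
    simpa [Nat.mod_eq_of_lt hi0, hfi0] using this
  have hi1X : h (i0 + 1) ∉ X := by
    have := (hdir e heS).2
    rw [← hstep i0]
    simpa [Nat.mod_eq_of_lt hi0, hfi0] using this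
  -- find a re-entry point into X
  have find : ∀ (m a : ℕ), h a ∉ X → h (a + m) ∈ X →
      ∃ j, h j ∉ X ∧ h (j + 1) ∈ X := by
    intro m
    induction m with
    | zero => intro a ha hb; exact absurd hb ha
    | succ m ih =>
      intro a ha hb
      by_cases hc : h (a + 1) ∈ X
      · exact ⟨a, ha, hc⟩
      · exact ih (a + 1) hc (by rwa [show a + 1 + m = a + (m + 1) by omega])
  have hn1 : i0 + 1 + (n - 1) = i0 + n := by omega
  obtain ⟨j, hjX, hj1X⟩ := find (n - 1) (i0 + 1) hi1X
    (by rw [hn1, hper]; exact hi0X)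
  -- the edge f (j % n) enters X, contradicting that S is a directed cut from X
  set g0 := f (j % n) with hg0
  have hg0cr : g0 ∈ crossing ends X := by
    refine (mem_crossing_iff (O := O)).mpr (Or.inr ⟨?_, ?_⟩)
    · exact hjX
    · rw [hstep j]; exact hj1X
  have hg0S : g0 ∈ S := by rw [hSX]; exact hg0cr
  have := (hdir g0 hg0S).1
  exact hjX this

end Aux

/-- In any orientation, every edge lies in a directed cut or in a directed cycle but not
both; consequently the sets of cut-active and cycle-active edges are disjoint. -/
theorem edge_dirCut_xor_dirCyc (ends : ε → V × V) (O : ε → Bool) :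
    (∀ e : ε, Xor' (∃ S, IsDirCut ends O S ∧ e ∈ S) (∃ S, IsDirCyc ends O S ∧ e ∈ S)) ∧
    (∀ σ : ε → ℕ, Function.Injective σ → ∀ e : ε,
      ¬ ((∃ S, IsDirCut ends O S ∧ e ∈ S ∧ ∀ g ∈ S, σ e ≤ σ g) ∧
         (∃ S, IsDirCyc ends O S ∧ e ∈ S ∧ ∀ g ∈ S, σ e ≤ σ g))) := by
  constructor
  · intro e
    rcases dirCut_or_dirCyc ends O e with h | h
    · exact Or.inl ⟨h, fun h' => not_dirCut_and_dirCyc ends O e ⟨h, h'⟩⟩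
    · exact Or.inr ⟨h, fun h' => not_dirCut_and_dirCyc ends O e ⟨h', h⟩⟩
  · rintro σ - e ⟨⟨S, h1, h2, -⟩, ⟨C, h3, h4, -⟩⟩
    exact not_dirCut_and_dirCyc ends O e ⟨⟨S, h1, h2⟩, ⟨C, h3, h4⟩⟩

end TutteActivities
end
end
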